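/- arXiv:2212.14269 — 9 statements merged into one kernel-verified Lean document; each statement's English description precedes it below -/
import Mathlib

section
/- If φ : ℂ → ℂ is entire and ∫_ℂ |φ(z)|² e^{−|z|²} dx dy < ∞, then for every fixed x ∈ ℝ the restriction of φ to the vertical line x + iℝ is square integrable with respect to the measure e^{−y²} dy, i.e. ∫_ℝ e^{−y²} |φ(x + iy)|² dy < ∞. -/
open MeasureTheory
open Real Set
open scoped ENNReal NNReal

lemma circle_submean (f : ℂ → ℂ) (hf : Differentiable ℂ f) (c : ℂ) {R : ℝ} (hR : 0 < R) :
    ‖f c‖ ^ 2 * (2 * π) ≤ ∫ θ in (0:ℝ)..(2 * π), ‖f (circleMap c R θ)‖ ^ 2 := by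
  set g : ℂ → ℂ := fun z => f z * f z with hg
  have hgd : Differentiable ℂ g := hf.mul hf
  have h := (hgd.differentiableOn (s := Metric.closedBall c R)).circleIntegral_sub_inv_smul
    (Metric.mem_ball_self hR)
  rw [circleIntegral] at h
  have h2 : ∀ θ : ℝ, deriv (circleMap c R) θ • ((circleMap c R θ - c)⁻¹ • g (circleMap c R θ))
      = Complex.I * g (circleMap c R θ) := by
    intro θ
    rw [deriv_circleMap, circleMap_sub_center, smul_eq_mul, smul_eq_mul]
    have hne : circleMap 0 R θ ≠ 0 := by
      simpa using circleMap_ne_center hR.ne' (c := 0) (θ := θ)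
    field_simp
  simp only [h2] at h
  rw [intervalIntegral.integral_const_mul] at h
  have h3 : (∫ θ in (0:ℝ)..(2 * π), g (circleMap c R θ)) = (2 * π) • g c := by
    have hI : (Complex.I : ℂ) ≠ 0 := Complex.I_ne_zero
    have : Complex.I * (∫ θ in (0:ℝ)..(2 * π), g (circleMap c R θ))
        = Complex.I * ((2 * π : ℝ) • g c) := by
      rw [h]; rw [smul_eq_mul, Complex.real_smul]; push_cast; ring
    exact mul_left_cancel₀ hI this
  have h4 : ‖f c‖ ^ 2 * (2 * π) = ‖∫ θ in (0:ℝ)..(2 * π), g (circleMap c R θ)‖ := by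
    rw [h3, norm_smul]
    simp [hg, norm_mul, abs_of_pos Real.pi_pos, pow_two]
    ring
  rw [h4]
  have h5 := intervalIntegral.norm_integral_le_integral_norm
    (f := fun θ => g (circleMap c R θ)) (μ := volume) (le_of_lt Real.two_pi_pos)
  refine h5.trans (le_of_eq ?_)
  apply intervalIntegral.integral_congr
  intro θ _
  simp [hg, norm_mul, pow_two]

set_option maxHeartbeats 1000000 in
lemma ball_submean (f : ℂ → ℂ) (hf : Differentiable ℂ f) (c : ℂ) :
    ‖f c‖ ^ 2 * π ≤ ∫ v in Metric.ball c 1, ‖f v‖ ^ 2 := by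
  set h : ℂ → ℝ := fun v => ‖f v‖ ^ 2 with hh
  have hcont : Continuous h := (hf.continuous.norm).pow 2
  -- translate the ball to the origin
  have htrans : (∫ v in Metric.ball c 1, h v) = ∫ v in Metric.ball (0:ℂ) 1, h (c + v) := by
    rw [← integral_indicator measurableSet_ball, ← integral_indicator measurableSet_ball,
      ← integral_add_left_eq_self (μ := volume) ((Metric.ball c 1).indicator h) c]
    congr 1
    funext v
    by_cases hv : v ∈ Metric.ball (0:ℂ) 1
    · rw [indicator_of_mem hv, indicator_of_mem (by simpa [Metric.mem_ball, dist_eq_norm] using hv)]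
    · rw [indicator_of_notMem hv, indicator_of_notMem
        (by simpa [Metric.mem_ball, dist_eq_norm] using hv)]
  -- polar coordinates
  have hpolar := Complex.integral_comp_polarCoord_symm
    (fun v => (Metric.ball (0:ℂ) 1).indicator (fun v => h (c + v)) v)
  rw [htrans, ← integral_indicator measurableSet_ball, ← hpolar]
  -- restrict to r < 1
  have hset : (∫ p in polarCoord.target,
        p.1 • (Metric.ball (0:ℂ) 1).indicator (fun v => h (c + v)) (Complex.polarCoord.symm p))
      = ∫ p in Ioo (0:ℝ) 1 ×ˢ Ioo (-π) π,
        p.1 • h (c + Complex.polarCoord.symm p) := by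
    rw [← integral_indicator polarCoord.open_target.measurableSet,
      ← integral_indicator (measurableSet_Ioo.prod measurableSet_Ioo)]
    congr 1
    funext p
    by_cases hp : p ∈ Ioo (0:ℝ) 1 ×ˢ Ioo (-π) π
    · have hp' : p ∈ polarCoord.target := by
        rw [polarCoord_target]
        exact ⟨mem_Ioi.2 hp.1.1, hp.2⟩
      rw [indicator_of_mem hp', indicator_of_mem hp]
      have : Complex.polarCoord.symm p ∈ Metric.ball (0:ℂ) 1 := by
        rw [Metric.mem_ball, dist_zero_right, Complex.norm_polarCoord_symm,
          abs_of_pos hp.1.1]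
        exact hp.1.2
      rw [indicator_of_mem this]
    · by_cases hp' : p ∈ polarCoord.target
      · rw [indicator_of_mem hp', indicator_of_notMem hp]
        rw [polarCoord_target] at hp'
        have h1 : (1:ℝ) ≤ p.1 := by
          by_contra hlt
          exact hp ⟨⟨hp'.1, not_le.1 hlt⟩, hp'.2⟩
        have : Complex.polarCoord.symm p ∉ Metric.ball (0:ℂ) 1 := by
          rw [Metric.mem_ball, dist_zero_right, Complex.norm_polarCoord_symm]
          exact not_lt.2 (h1.trans (le_abs_self p.1))
        rw [indicator_of_notMem this, smul_zero]
      · rw [indicator_of_notMem hp', indicator_of_notMem hp]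
  rw [hset]
  -- the integrand is continuous, hence integrable on the compact rectangle
  have hgcont : Continuous fun p : ℝ × ℝ => p.1 • h (c + Complex.polarCoord.symm p) := by
    apply continuous_fst.smul
    apply hcont.comp
    apply continuous_const.add
    have : Continuous fun p : ℝ × ℝ => (p.1 : ℂ) * (Real.cos p.2 + Real.sin p.2 * Complex.I) := by
      continuity
    simpa [funext fun p => Complex.polarCoord_symm_apply p] using this
  have hInt : IntegrableOn (fun p : ℝ × ℝ => p.1 • h (c + Complex.polarCoord.symm p))
      (Ioo (0:ℝ) 1 ×ˢ Ioo (-π) π) := by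
    refine IntegrableOn.mono_set (t := Icc (0:ℝ) 1 ×ˢ Icc (-π) π)
      (hgcont.continuousOn.integrableOn_compact (isCompact_Icc.prod isCompact_Icc)) ?_
    exact Set.prod_mono Ioo_subset_Icc_self Ioo_subset_Icc_self
  rw [Measure.volume_eq_prod] at hInt ⊢
  -- Fubini on the rectangle
  rw [setIntegral_prod _ hInt]
  -- inner circle integrals
  have hkey : ∀ r ∈ Ioo (0:ℝ) 1,
      ‖f c‖ ^ 2 * (2 * π) * r ≤ ∫ θ in Ioo (-π) π, r • h (c + Complex.polarCoord.symm (r, θ)) := by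
    intro r hr
    have hcm : ∀ θ : ℝ, c + Complex.polarCoord.symm (r, θ) = circleMap c r θ := by
      intro θ
      rw [Complex.polarCoord_symm_apply, circleMap, Complex.exp_mul_I]
      push_cast
      ring
    simp only [hcm, smul_eq_mul]
    rw [MeasureTheory.integral_const_mul, ← MeasureTheory.integral_Ioc_eq_integral_Ioo,
      ← intervalIntegral.integral_of_le (by linarith [Real.pi_pos])]
    have hper : Function.Periodic (fun θ => h (circleMap c r θ)) (2 * π) :=
      (periodic_circleMap c r).comp h
    have hshift := hper.intervalIntegral_add_eq (-π) 0
    rw [show -π + 2 * π = π by ring, show (0:ℝ) + 2 * π = 2 * π by ring] at hshift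
    rw [hshift]
    have := circle_submean f hf c hr.1
    calc ‖f c‖ ^ 2 * (2 * π) * r = r * (‖f c‖ ^ 2 * (2 * π)) := by ring
    _ ≤ r * ∫ θ in (0:ℝ)..(2 * π), h (circleMap c r θ) :=
        mul_le_mul_of_nonneg_left this hr.1.le
  -- integrability of the marginal
  have hmarg : IntegrableOn
      (fun r => ∫ θ in Ioo (-π) π, r • h (c + Complex.polarCoord.symm (r, θ))) (Ioo (0:ℝ) 1) := by
    rw [IntegrableOn, ← Measure.prod_restrict] at hInt
    exact hInt.integral_prod_left
  have hconst : IntegrableOn (fun r : ℝ => ‖f c‖ ^ 2 * (2 * π) * r) (Ioo (0:ℝ) 1) :=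
    ((continuous_const.mul continuous_id).continuousOn.integrableOn_compact
      isCompact_Icc).mono_set Ioo_subset_Icc_self
  have hhalf : (∫ r in Ioo (0:ℝ) 1, ‖f c‖ ^ 2 * (2 * π) * r) = ‖f c‖ ^ 2 * π := by
    rw [MeasureTheory.integral_const_mul, ← MeasureTheory.integral_Ioc_eq_integral_Ioo,
      ← intervalIntegral.integral_of_le zero_le_one, integral_id]
    ring
  calc ‖f c‖ ^ 2 * π = ∫ r in Ioo (0:ℝ) 1, ‖f c‖ ^ 2 * (2 * π) * r := hhalf.symm
  _ ≤ _ := setIntegral_mono_on hconst hmarg measurableSet_Ioo hkey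

lemma setIntegral_ball_translate (F : ℂ → ℝ) (w : ℂ) :
    ∫ v in Metric.ball w 1, F v = ∫ v in Metric.ball (0:ℂ) 1, F (w + v) := by
  rw [← integral_indicator measurableSet_ball, ← integral_indicator measurableSet_ball,
    ← integral_add_left_eq_self (μ := volume) ((Metric.ball w 1).indicator F) w]
  congr 1
  funext v
  by_cases hv : v ∈ Metric.ball (0:ℂ) 1
  · rw [indicator_of_mem hv, indicator_of_mem (by simpa [Metric.mem_ball, dist_eq_norm] using hv)]
  · rw [indicator_of_notMem hv, indicator_of_notMem
      (by simpa [Metric.mem_ball, dist_eq_norm] using hv)]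

lemma pointwise_gaussian_bound (φ : ℂ → ℂ) (hφ : Differentiable ℂ φ) (w : ℂ) :
    ‖φ w‖ ^ 2 * Real.exp (-‖w‖ ^ 2) * π ≤
      Real.exp 1 * ∫ v in Metric.ball (0:ℂ) 1, ‖φ (w + v)‖ ^ 2 * Real.exp (-‖w + v‖ ^ 2) := by
  set g : ℂ → ℂ := fun z => φ z * Complex.exp (-((starRingEnd ℂ) w * z)) with hg
  have hgd : Differentiable ℂ g :=
    hφ.mul (((differentiable_const _).mul differentiable_id).neg.cexp)
  have hexp : ∀ z : ℂ, ‖Complex.exp (-((starRingEnd ℂ) w * z))‖ ^ 2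
      = Real.exp (‖z - w‖ ^ 2 - ‖z‖ ^ 2 - ‖w‖ ^ 2) := by
    intro z
    rw [Complex.norm_exp, sq, ← Real.exp_add]
    congr 1
    have h1 : ‖z - w‖ ^ 2 = (z.re - w.re)^2 + (z.im - w.im)^2 := by
      rw [Complex.sq_norm, Complex.normSq_apply, Complex.sub_re,
        Complex.sub_im]; ring
    have h2 : ‖z‖ ^ 2 = z.re^2 + z.im^2 := by
      rw [Complex.sq_norm, Complex.normSq_apply]; ring
    have h3 : ‖w‖ ^ 2 = w.re^2 + w.im^2 := by
      rw [Complex.sq_norm, Complex.normSq_apply]; ring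
    have h4 : (-((starRingEnd ℂ) w * z)).re = -(w.re * z.re + w.im * z.im) := by
      simp [Complex.mul_re]
    rw [h1, h2, h3, h4]
    ring
  have hng : ∀ z : ℂ, ‖g z‖ ^ 2
      = ‖φ z‖ ^ 2 * Real.exp (‖z - w‖ ^ 2 - ‖z‖ ^ 2 - ‖w‖ ^ 2) := by
    intro z
    rw [hg]
    simp only [norm_mul, mul_pow]
    rw [hexp z]
  have hsub := ball_submean g hgd w
  -- bound the integrand on the ball
  have hmono : ∀ v ∈ Metric.ball w 1, ‖g v‖ ^ 2 ≤
      Real.exp 1 * Real.exp (-‖w‖ ^ 2) * (‖φ v‖ ^ 2 * Real.exp (-‖v‖ ^ 2)) := by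
    intro v hv
    rw [hng v]
    have hvw : ‖v - w‖ ^ 2 ≤ 1 := by
      rw [Metric.mem_ball, dist_eq_norm] at hv
      nlinarith [norm_nonneg (v - w)]
    have : Real.exp (‖v - w‖ ^ 2 - ‖v‖ ^ 2 - ‖w‖ ^ 2)
        ≤ Real.exp (1 - ‖v‖ ^ 2 - ‖w‖ ^ 2) := Real.exp_le_exp.2 (by linarith)
    calc ‖φ v‖ ^ 2 * Real.exp (‖v - w‖ ^ 2 - ‖v‖ ^ 2 - ‖w‖ ^ 2)
        ≤ ‖φ v‖ ^ 2 * Real.exp (1 - ‖v‖ ^ 2 - ‖w‖ ^ 2) :=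
          mul_le_mul_of_nonneg_left this (by positivity)
      _ = Real.exp 1 * Real.exp (-‖w‖ ^ 2) * (‖φ v‖ ^ 2 * Real.exp (-‖v‖ ^ 2)) := by
          rw [show (1:ℝ) - ‖v‖ ^ 2 - ‖w‖ ^ 2 = 1 + -‖w‖ ^ 2 + -‖v‖ ^ 2 by ring,
            Real.exp_add, Real.exp_add]; ring
  have hInt1 : IntegrableOn (fun v => ‖g v‖ ^ 2) (Metric.ball w 1) :=
    ((hgd.continuous.norm.pow 2).continuousOn.integrableOn_compact
      (isCompact_closedBall w 1)).mono_set Metric.ball_subset_closedBall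
  have hInt2 : IntegrableOn (fun v => Real.exp 1 * Real.exp (-‖w‖ ^ 2) *
      (‖φ v‖ ^ 2 * Real.exp (-‖v‖ ^ 2))) (Metric.ball w 1) := by
    refine (Continuous.continuousOn ?_).integrableOn_compact (isCompact_closedBall w 1)
      |>.mono_set Metric.ball_subset_closedBall
    exact continuous_const.mul ((hφ.continuous.norm.pow 2).mul
      ((continuous_norm.pow 2).neg.rexp))
  have hle : (∫ v in Metric.ball w 1, ‖g v‖ ^ 2) ≤
      Real.exp 1 * Real.exp (-‖w‖ ^ 2) *
        ∫ v in Metric.ball w 1, ‖φ v‖ ^ 2 * Real.exp (-‖v‖ ^ 2) := by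
    rw [← MeasureTheory.integral_const_mul]
    exact setIntegral_mono_on hInt1 hInt2 measurableSet_ball hmono
  rw [setIntegral_ball_translate (fun v => ‖φ v‖ ^ 2 * Real.exp (-‖v‖ ^ 2)) w] at hle
  -- combine
  have hgw : ‖g w‖ ^ 2 = (‖φ w‖ ^ 2 * Real.exp (-‖w‖ ^ 2)) * Real.exp (-‖w‖ ^ 2) := by
    rw [hng w]
    simp only [sub_self, norm_zero]
    rw [show (0:ℝ) ^ 2 - ‖w‖ ^ 2 - ‖w‖ ^ 2 = (-‖w‖ ^ 2) + (-‖w‖ ^ 2) by ring, Real.exp_add]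
    ring
  have hfinal : (‖φ w‖ ^ 2 * Real.exp (-‖w‖ ^ 2) * π) * Real.exp (-‖w‖ ^ 2) ≤
      (Real.exp 1 * ∫ v in Metric.ball (0:ℂ) 1, ‖φ (w + v)‖ ^ 2 * Real.exp (-‖w + v‖ ^ 2)) *
        Real.exp (-‖w‖ ^ 2) := by
    calc (‖φ w‖ ^ 2 * Real.exp (-‖w‖ ^ 2) * π) * Real.exp (-‖w‖ ^ 2)
        = ‖g w‖ ^ 2 * π := by rw [hgw]; ring
      _ ≤ ∫ v in Metric.ball w 1, ‖g v‖ ^ 2 := hsub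
      _ ≤ _ := by
          refine hle.trans (le_of_eq ?_)
          ring
  exact le_of_mul_le_mul_right hfinal (Real.exp_pos _)

set_option maxHeartbeats 2000000 in
/-- If `φ` is entire and square integrable against the Gaussian weight on `ℂ`
(i.e. `φ` belongs to the Bargmann space), then for EVERY fixed `x ∈ ℝ` its
restriction to the vertical line `x + iℝ` is square integrable with respect to
the measure `e^{−y²} dy`. -/
theorem bargmann_restriction_vertical_line (φ : ℂ → ℂ)
    (hφ : Differentiable ℂ φ)
    (hint : Integrable (fun z : ℂ => ‖φ z‖ ^ 2 * Real.exp (-‖z‖ ^ 2))) :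
    ∀ x : ℝ, Integrable (fun y : ℝ => Real.exp (-y ^ 2) * ‖φ (x + y * Complex.I)‖ ^ 2) := by
  set F : ℂ → ℝ := fun z => ‖φ z‖ ^ 2 * Real.exp (-‖z‖ ^ 2) with hF
  have hFc : Continuous F := (hφ.continuous.norm.pow 2).mul ((continuous_norm.pow 2).neg.rexp)
  have hF0 : ∀ z, 0 ≤ F z := fun z => by positivity
  intro x
  have hcont : Continuous (fun y : ℝ => Real.exp (-y ^ 2) * ‖φ (x + y * Complex.I)‖ ^ 2) := by
    apply ((continuous_pow 2).neg.rexp).mul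
    apply Continuous.pow
    apply Continuous.norm
    exact hφ.continuous.comp (by continuity)
  refine ⟨hcont.aestronglyMeasurable, ?_⟩
  rw [hasFiniteIntegral_iff_ofReal (Filter.Eventually.of_forall fun y => by positivity)]
  -- norm on the vertical line
  have hnorm : ∀ y : ℝ, ‖(x:ℂ) + y * Complex.I‖ ^ 2 = x ^ 2 + y ^ 2 := by
    intro y
    rw [Complex.sq_norm, Complex.normSq_apply]
    simp
    ring
  have hfy : ∀ y : ℝ, Real.exp (-y ^ 2) * ‖φ (x + y * Complex.I)‖ ^ 2
      = Real.exp (x ^ 2) * F ((x:ℂ) + y * Complex.I) := by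
    intro y
    rw [hF]
    simp only
    rw [hnorm y, show -(x ^ 2 + y ^ 2) = -x ^ 2 + -y ^ 2 by ring, Real.exp_add]
    have hxx : Real.exp (x ^ 2) * Real.exp (-x ^ 2) = 1 := by
      rw [← Real.exp_add]; simp
    calc Real.exp (-y ^ 2) * ‖φ ((x:ℂ) + y * Complex.I)‖ ^ 2
        = (Real.exp (x ^ 2) * Real.exp (-x ^ 2)) *
          (Real.exp (-y ^ 2) * ‖φ ((x:ℂ) + y * Complex.I)‖ ^ 2) := by rw [hxx]; ring
      _ = Real.exp (x ^ 2) * (‖φ ((x:ℂ) + y * Complex.I)‖ ^ 2 *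
          (Real.exp (-x ^ 2) * Real.exp (-y ^ 2))) := by ring
  -- constant
  set C : ℝ≥0∞ := ENNReal.ofReal (Real.exp (x ^ 2) * Real.exp 1 / π) with hC
  have hCne : C ≠ ⊤ := ENNReal.ofReal_ne_top
  have hball : ∀ w : ℂ, IntegrableOn (fun v => F (w + v)) (Metric.ball (0:ℂ) 1) := by
    intro w
    exact ((hFc.comp (continuous_const.add continuous_id)).continuousOn.integrableOn_compact
      (isCompact_closedBall 0 1)).mono_set Metric.ball_subset_closedBall
  have key : ∀ y : ℝ, ENNReal.ofReal (Real.exp (-y ^ 2) * ‖φ (x + y * Complex.I)‖ ^ 2)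
      ≤ C * ∫⁻ v in Metric.ball (0:ℂ) 1,
          ENNReal.ofReal (F ((x:ℂ) + y * Complex.I + v)) := by
    intro y
    set w : ℂ := (x:ℂ) + y * Complex.I with hw
    have h1 := pointwise_gaussian_bound φ hφ w
    have h2 : Real.exp (-y ^ 2) * ‖φ w‖ ^ 2 ≤ (Real.exp (x ^ 2) * Real.exp 1 / π) *
        ∫ v in Metric.ball (0:ℂ) 1, F (w + v) := by
      rw [hfy y]
      rw [div_mul_eq_mul_div, le_div_iff₀ Real.pi_pos]
      calc Real.exp (x ^ 2) * F w * π
          = Real.exp (x ^ 2) * (‖φ w‖ ^ 2 * Real.exp (-‖w‖ ^ 2) * π) := by rw [hF]; ring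
        _ ≤ Real.exp (x ^ 2) * (Real.exp 1 * ∫ v in Metric.ball (0:ℂ) 1,
              ‖φ (w + v)‖ ^ 2 * Real.exp (-‖w + v‖ ^ 2)) :=
            mul_le_mul_of_nonneg_left h1 (Real.exp_pos _).le
        _ = Real.exp (x ^ 2) * Real.exp 1 * ∫ v in Metric.ball (0:ℂ) 1, F (w + v) := by
            rw [hF]; ring
    calc ENNReal.ofReal (Real.exp (-y ^ 2) * ‖φ w‖ ^ 2)
        ≤ ENNReal.ofReal ((Real.exp (x ^ 2) * Real.exp 1 / π) *
            ∫ v in Metric.ball (0:ℂ) 1, F (w + v)) := ENNReal.ofReal_le_ofReal h2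
      _ = C * ENNReal.ofReal (∫ v in Metric.ball (0:ℂ) 1, F (w + v)) := by
          rw [ENNReal.ofReal_mul (by positivity)]
      _ ≤ C * ∫⁻ v in Metric.ball (0:ℂ) 1, ENNReal.ofReal (F (w + v)) := by
          rw [ofReal_integral_eq_lintegral_ofReal (hball w)
            (Filter.Eventually.of_forall fun v => hF0 _)]
  -- measurability
  have hmeas2 : Measurable fun p : ℝ × ℂ => ENNReal.ofReal (F ((x:ℂ) + p.1 * Complex.I + p.2)) := by
    apply ENNReal.measurable_ofReal.comp
    apply Continuous.measurable
    exact hFc.comp (by continuity)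
  set G : ℝ → ℝ≥0∞ := fun t => ∫⁻ y : ℝ, ENNReal.ofReal (F ((t:ℂ) + y * Complex.I)) with hG
  have hmeasRP : Measurable fun p : ℝ × ℝ => ENNReal.ofReal (F ((p.1:ℂ) + p.2 * Complex.I)) := by
    apply ENNReal.measurable_ofReal.comp
    apply Continuous.measurable
    exact hFc.comp (by continuity)
  have hGmeas : Measurable G := Measurable.lintegral_prod_right hmeasRP
  have hGtot : (∫⁻ t : ℝ, G t) = ∫⁻ z : ℂ, ENNReal.ofReal (F z) := by
    have h1 := Complex.volume_preserving_equiv_real_prod.lintegral_comp hmeasRP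
    rw [Measure.volume_eq_prod, lintegral_prod _ hmeasRP.aemeasurable] at h1
    rw [hG, ← h1]
    congr 1
    funext z
    congr 1
    congr 1
    simp [Complex.measurableEquivRealProd_apply]
  have hM : (∫⁻ z : ℂ, ENNReal.ofReal (F z)) < ⊤ := by
    have := hint.2
    rwa [hasFiniteIntegral_iff_ofReal (Filter.Eventually.of_forall fun z => hF0 z)] at this
  -- swap
  have hswap : (∫⁻ y : ℝ, ∫⁻ v in Metric.ball (0:ℂ) 1,
        ENNReal.ofReal (F ((x:ℂ) + y * Complex.I + v)))
      = ∫⁻ v in Metric.ball (0:ℂ) 1, ∫⁻ y : ℝ,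
        ENNReal.ofReal (F ((x:ℂ) + y * Complex.I + v)) :=
    lintegral_lintegral_swap hmeas2.aemeasurable
  have hinner : ∀ v : ℂ, (∫⁻ y : ℝ, ENNReal.ofReal (F ((x:ℂ) + y * Complex.I + v)))
      = G (x + v.re) := by
    intro v
    have hrw : ∀ y : ℝ, (x:ℂ) + y * Complex.I + v
        = ((x + v.re : ℝ) : ℂ) + ((y + v.im : ℝ) : ℂ) * Complex.I := by
      intro y
      apply Complex.ext <;> simp
    simp_rw [hrw]
    exact lintegral_add_right_eq_self
      (fun y : ℝ => ENNReal.ofReal (F (((x + v.re : ℝ) : ℂ) + (y:ℂ) * Complex.I))) v.im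
  -- bound the ball integral of G
  have hbound : (∫⁻ v in Metric.ball (0:ℂ) 1, G (x + v.re))
      ≤ 2 * ∫⁻ z : ℂ, ENNReal.ofReal (F z) := by
    have hsub : Metric.ball (0:ℂ) 1 ⊆
        Complex.measurableEquivRealProd ⁻¹' (Ioo (-1:ℝ) 1 ×ˢ Ioo (-1:ℝ) 1) := by
      intro v hv
      rw [Metric.mem_ball, dist_zero_right] at hv
      have h1 : |v.re| < 1 := lt_of_le_of_lt (Complex.abs_re_le_norm v) hv
      have h2 : |v.im| < 1 := lt_of_le_of_lt (Complex.abs_im_le_norm v) hv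
      rw [abs_lt] at h1 h2
      exact ⟨⟨h1.1, h1.2⟩, ⟨h2.1, h2.2⟩⟩
    have hf1 : Measurable fun p : ℝ × ℝ => G (x + p.1) :=
      hGmeas.comp (measurable_const.add measurable_fst)
    calc (∫⁻ v in Metric.ball (0:ℂ) 1, G (x + v.re))
        ≤ ∫⁻ v in Complex.measurableEquivRealProd ⁻¹' (Ioo (-1:ℝ) 1 ×ˢ Ioo (-1:ℝ) 1),
            G (x + v.re) := lintegral_mono_set hsub
      _ = ∫⁻ p in Ioo (-1:ℝ) 1 ×ˢ Ioo (-1:ℝ) 1, G (x + p.1) := by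
          exact Complex.volume_preserving_equiv_real_prod.setLIntegral_comp_preimage
            (measurableSet_Ioo.prod measurableSet_Ioo) hf1
      _ = ∫⁻ a in Ioo (-1:ℝ) 1, ∫⁻ _b in Ioo (-1:ℝ) 1, G (x + a) := by
          rw [Measure.volume_eq_prod, ← Measure.prod_restrict,
            lintegral_prod _ (hf1.aemeasurable)]
      _ = ∫⁻ a in Ioo (-1:ℝ) 1, G (x + a) * 2 := by
          apply lintegral_congr
          intro a
          rw [setLIntegral_const, Real.volume_Ioo]
          norm_num
      _ = (∫⁻ a in Ioo (-1:ℝ) 1, G (x + a)) * 2 :=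
          lintegral_mul_const'' 2 (hGmeas.comp (measurable_const.add measurable_id)).aemeasurable
      _ ≤ (∫⁻ a : ℝ, G (x + a)) * 2 :=
          mul_le_mul_left (setLIntegral_le_lintegral _ _) 2
      _ = (∫⁻ t : ℝ, G t) * 2 := by
          rw [lintegral_add_left_eq_self (fun t => G t) x]
      _ = 2 * ∫⁻ z : ℂ, ENNReal.ofReal (F z) := by rw [hGtot]; ring
  -- put everything together
  calc (∫⁻ y : ℝ, ENNReal.ofReal (Real.exp (-y ^ 2) * ‖φ (x + y * Complex.I)‖ ^ 2))
      ≤ ∫⁻ y : ℝ, C * ∫⁻ v in Metric.ball (0:ℂ) 1,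
          ENNReal.ofReal (F ((x:ℂ) + y * Complex.I + v)) := lintegral_mono key
    _ = C * ∫⁻ y : ℝ, ∫⁻ v in Metric.ball (0:ℂ) 1,
          ENNReal.ofReal (F ((x:ℂ) + y * Complex.I + v)) := lintegral_const_mul' _ _ hCne
    _ = C * ∫⁻ v in Metric.ball (0:ℂ) 1, G (x + v.re) := by
        rw [hswap]
        congr 1
        exact lintegral_congr fun v => hinner v
    _ ≤ C * (2 * ∫⁻ z : ℂ, ENNReal.ofReal (F z)) := mul_le_mul_right hbound C
    _ < ⊤ := ENNReal.mul_lt_top hCne.lt_top (ENNReal.mul_lt_top (by norm_num) hM)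
end

section
/- Let μ, λ ∈ ℝ. For every finitely supported sequence a : ℕ → ℂ with a_0 = 0, one has ‖H_{μ,λ}a‖ ≥ |μ|·‖a‖, where ‖·‖ is the ℓ²-norm. -/
/-- The Gribov matrix `H_{μ,λ}` acting on sequences:
`(Ha)₀ = 0` and `(Ha)ₙ = iλ(n−1)√n·a_{n−1} + μn·aₙ + iλn√(n+1)·a_{n+1}` for `n ≥ 1`. -/
noncomputable def gribovH (μ lam : ℝ) (a : ℕ → ℂ) : ℕ → ℂ := fun n =>
  if n = 0 then 0 else
    Complex.I * (lam : ℂ) * ((n - 1 : ℕ) : ℂ) * (Real.sqrt n : ℂ) * a (n - 1)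
      + (μ : ℂ) * (n : ℂ) * a n
      + Complex.I * (lam : ℂ) * (n : ℂ) * (Real.sqrt (n + 1) : ℂ) * a (n + 1)

/-- The ℓ²-norm of a sequence. -/
noncomputable def l2norm (a : ℕ → ℂ) : ℝ := Real.sqrt (∑' n, ‖a n‖ ^ 2)

lemma gribovH_apply (μ lam : ℝ) (a : ℕ → ℂ) (n : ℕ) :
    gribovH μ lam a n =
      Complex.I * (lam : ℂ) * ((n - 1 : ℕ) : ℂ) * (Real.sqrt n : ℂ) * a (n - 1)
      + (μ : ℂ) * (n : ℂ) * a n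
      + Complex.I * (lam : ℂ) * (n : ℂ) * (Real.sqrt (n + 1) : ℂ) * a (n + 1) := by
  unfold gribovH
  rcases n with _ | m
  · simp
  · simp

/-- For every finitely supported sequence `a` with `a₀ = 0`,
`‖H_{μ,λ} a‖ ≥ |μ|·‖a‖`. -/
theorem gribovH_norm_lower_bound (μ lam : ℝ) (a : ℕ → ℂ)
    (hfin : (Function.support a).Finite) (h0 : a 0 = 0) :
    l2norm (gribovH μ lam a) ≥ |μ| * l2norm a := by
  classical
  obtain ⟨N, hN⟩ : ∃ N, ∀ n, N ≤ n → a n = 0 := by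
    obtain ⟨N, hNb⟩ := hfin.bddAbove
    refine ⟨N + 1, fun n hn => ?_⟩
    by_contra h
    exact absurd (hNb (Function.mem_support.mpr h)) (by omega)
  set b := gribovH μ lam a with hb
  set s : Finset ℕ := Finset.range (N + 2) with hs
  have hQa : ∑' n, ‖a n‖ ^ 2 = ∑ n ∈ s, ‖a n‖ ^ 2 := by
    refine tsum_eq_sum (fun n hn => ?_)
    have : a n = 0 := hN n (by simp [hs, Finset.mem_range] at hn; omega)
    simp [this]
  have hQb : ∑' n, ‖b n‖ ^ 2 = ∑ n ∈ s, ‖b n‖ ^ 2 := by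
    refine tsum_eq_sum (fun n hn => ?_)
    have hn2 : N + 2 ≤ n := by simpa [hs, Finset.mem_range, Nat.not_lt] using hn
    have h1 : a (n - 1) = 0 := hN _ (by omega)
    have h2 : a n = 0 := hN _ (by omega)
    have h3 : a (n + 1) = 0 := hN _ (by omega)
    rw [hb, gribovH_apply, h1, h2, h3]
    simp
  set Qa := ∑ n ∈ s, ‖a n‖ ^ 2 with hQadef
  set Qb := ∑ n ∈ s, ‖b n‖ ^ 2 with hQbdef
  have hQa0 : 0 ≤ Qa := Finset.sum_nonneg fun n _ => sq_nonneg _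
  have hQb0 : 0 ≤ Qb := Finset.sum_nonneg fun n _ => sq_nonneg _
  -- the inner product
  set S : ℂ := ∑ n ∈ s, b n * (starRingEnd ℂ) (a n) with hS
  -- real part identity
  have hSre : S.re = μ * ∑ n ∈ s, (n : ℝ) * ‖a n‖ ^ 2 := by
    have hsplit : S =
        ((∑ n ∈ s, Complex.I * (lam : ℂ) * ((n - 1 : ℕ) : ℂ) * (Real.sqrt n : ℂ) * a (n - 1) * (starRingEnd ℂ) (a n))
        + ∑ n ∈ s, (μ : ℂ) * (n : ℂ) * a n * (starRingEnd ℂ) (a n))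
        + ∑ n ∈ s, Complex.I * (lam : ℂ) * (n : ℂ) * (Real.sqrt (n + 1) : ℂ) * a (n + 1) * (starRingEnd ℂ) (a n) := by
      rw [hS, ← Finset.sum_add_distrib, ← Finset.sum_add_distrib]
      refine Finset.sum_congr rfl fun n _ => ?_
      rw [hb, gribovH_apply]; ring
    have hA : (∑ n ∈ s, Complex.I * (lam : ℂ) * ((n - 1 : ℕ) : ℂ) * (Real.sqrt n : ℂ) * a (n - 1) * (starRingEnd ℂ) (a n))
        = ∑ n ∈ Finset.range (N + 1), Complex.I * (lam : ℂ) * (n : ℂ) * (Real.sqrt (n + 1) : ℂ) * a n * (starRingEnd ℂ) (a (n + 1)) := by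
      rw [hs, Finset.sum_range_succ']
      simp only [Nat.add_sub_cancel, Nat.zero_sub, Nat.cast_zero]
      push_cast
      simp
    have hC : (∑ n ∈ s, Complex.I * (lam : ℂ) * (n : ℂ) * (Real.sqrt (n + 1) : ℂ) * a (n + 1) * (starRingEnd ℂ) (a n))
        = ∑ n ∈ Finset.range (N + 1), Complex.I * (lam : ℂ) * (n : ℂ) * (Real.sqrt (n + 1) : ℂ) * a (n + 1) * (starRingEnd ℂ) (a n) := by
      rw [hs, Finset.sum_range_succ]
      rw [hN (N + 1 + 1) (by omega)]
      simp
    rw [hsplit]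
    simp only [Complex.add_re]
    have hAC : (∑ n ∈ s, Complex.I * (lam : ℂ) * ((n - 1 : ℕ) : ℂ) * (Real.sqrt n : ℂ) * a (n - 1) * (starRingEnd ℂ) (a n)).re
        + (∑ n ∈ s, Complex.I * (lam : ℂ) * (n : ℂ) * (Real.sqrt (n + 1) : ℂ) * a (n + 1) * (starRingEnd ℂ) (a n)).re = 0 := by
      rw [hA, hC, ← Complex.add_re, ← Finset.sum_add_distrib, Complex.re_sum]
      refine Finset.sum_eq_zero fun n _ => ?_
      set z := a n; set w := a (n + 1)
      simp [Complex.mul_re, Complex.mul_im, Complex.conj_re, Complex.conj_im]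
      ring
    have hB : (∑ n ∈ s, (μ : ℂ) * (n : ℂ) * a n * (starRingEnd ℂ) (a n)).re
        = μ * ∑ n ∈ s, (n : ℝ) * ‖a n‖ ^ 2 := by
      rw [Complex.re_sum, Finset.mul_sum]
      refine Finset.sum_congr rfl fun n _ => ?_
      rw [mul_assoc, mul_assoc, Complex.mul_conj']
      have hcast : ((μ:ℂ) * ((n:ℂ) * ((‖a n‖:ℝ):ℂ)^2)) = ((μ * ((n:ℝ) * ‖a n‖^2) : ℝ) : ℂ) := by
        push_cast; ring
      rw [hcast, Complex.ofReal_re]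
    linarith [hAC, hB]
  -- lower bound on |S.re|
  have hT : Qa ≤ ∑ n ∈ s, (n : ℝ) * ‖a n‖ ^ 2 := by
    refine Finset.sum_le_sum fun n _ => ?_
    rcases n with _ | m
    · simp [h0]
    · have h1 : (1 : ℝ) ≤ ((m + 1 : ℕ) : ℝ) := by push_cast; linarith [Nat.cast_nonneg (α := ℝ) m]
      nlinarith [sq_nonneg ‖a (m + 1)‖]
  have hlow : |μ| * Qa ≤ |S.re| := by
    rw [hSre, abs_mul]
    have hT0 : (0 : ℝ) ≤ ∑ n ∈ s, (n : ℝ) * ‖a n‖ ^ 2 :=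
      Finset.sum_nonneg fun n _ => mul_nonneg (Nat.cast_nonneg n) (sq_nonneg _)
    rw [abs_of_nonneg hT0]
    exact mul_le_mul_of_nonneg_left hT (abs_nonneg μ)
  -- Cauchy-Schwarz
  have hCS : ‖S‖ ≤ Real.sqrt Qb * Real.sqrt Qa := by
    have h1 : ‖S‖ ≤ ∑ n ∈ s, ‖b n‖ * ‖a n‖ := by
      refine (norm_sum_le s _).trans_eq ?_
      refine Finset.sum_congr rfl fun n _ => ?_
      rw [norm_mul, RCLike.norm_conj]
    have h2 : (∑ n ∈ s, ‖b n‖ * ‖a n‖) ^ 2 ≤ Qb * Qa :=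
      Finset.sum_mul_sq_le_sq_mul_sq s _ _
    have h3 : (0 : ℝ) ≤ ∑ n ∈ s, ‖b n‖ * ‖a n‖ :=
      Finset.sum_nonneg fun n _ => mul_nonneg (norm_nonneg _) (norm_nonneg _)
    calc ‖S‖ ≤ ∑ n ∈ s, ‖b n‖ * ‖a n‖ := h1
      _ = Real.sqrt ((∑ n ∈ s, ‖b n‖ * ‖a n‖) ^ 2) := (Real.sqrt_sq h3).symm
      _ ≤ Real.sqrt (Qb * Qa) := Real.sqrt_le_sqrt h2
      _ = Real.sqrt Qb * Real.sqrt Qa := Real.sqrt_mul hQb0 _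
  have hre_le : |S.re| ≤ ‖S‖ := Complex.abs_re_le_norm S
  -- conclude
  have hLa : l2norm a = Real.sqrt Qa := by rw [l2norm, hQa]
  have hLb : l2norm b = Real.sqrt Qb := by rw [l2norm, hQb]
  rw [ge_iff_le, hLa, hLb]
  have key : |μ| * Qa ≤ Real.sqrt Qb * Real.sqrt Qa := le_trans hlow (le_trans hre_le hCS)
  rcases eq_or_lt_of_le (Real.sqrt_nonneg Qa) with hz | hz
  · rw [← hz, mul_zero]; exact Real.sqrt_nonneg Qb
  · have key2 : |μ| * Real.sqrt Qa * Real.sqrt Qa ≤ Real.sqrt Qb * Real.sqrt Qa := by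
      rw [mul_assoc, Real.mul_self_sqrt hQa0]; exact key
    exact le_of_mul_le_mul_right key2 hz
end

section
/- Let μ > 0 and λ ∈ ℝ. For every ε > 0 and every finitely supported sequence a : ℕ → ℂ with a_0 = 0, the following fundamental inequality holds: (μ − ε) · (∑_{n=0}^∞ n²·|a_n|²)^{1/2} ≤ ‖H_{μ,λ}a‖ + (λ²/(4ε)) · ‖a‖. -/
private lemma cs_sqrt (s : Finset ℕ) (f g : ℕ → ℝ) :
    ∑ i ∈ s, f i * g i ≤ Real.sqrt (∑ i ∈ s, f i ^ 2) * Real.sqrt (∑ i ∈ s, g i ^ 2) := by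
  have h := Finset.sum_mul_sq_le_sq_mul_sq s f g
  calc ∑ i ∈ s, f i * g i ≤ Real.sqrt ((∑ i ∈ s, f i * g i) ^ 2) := by
        rw [Real.sqrt_sq_eq_abs]; exact le_abs_self _
    _ ≤ Real.sqrt ((∑ i ∈ s, f i ^ 2) * ∑ i ∈ s, g i ^ 2) := Real.sqrt_le_sqrt h
    _ = _ := Real.sqrt_mul (Finset.sum_nonneg fun i _ => sq_nonneg _) _

private lemma young_ineq (ε lam u v : ℝ) (hε : 0 < ε) :
    |lam| * (u * v) ≤ ε * u ^ 2 + lam ^ 2 / (4 * ε) * v ^ 2 := by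
  rw [← sub_nonneg, show ε * u ^ 2 + lam ^ 2 / (4 * ε) * v ^ 2 - |lam| * (u * v)
      = (2 * ε * u - |lam| * v) ^ 2 / (4 * ε) by
    rw [← sq_abs lam]; field_simp; ring]
  positivity

/-- The fundamental inequality: for `μ > 0`, every `ε > 0` and every finitely
supported sequence `a`,
`(μ − ε)·‖A*A a‖ ≤ ‖H_{μ,λ} a‖ + (λ²/(4ε))·‖a‖`, where
`‖A*A a‖ = (∑ n²|aₙ|²)^{1/2}` is the norm of the number-operator image of `a`. -/
theorem gribovH_fundamental_inequality (μ lam : ℝ) (hμ : 0 < μ)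
    (ε : ℝ) (hε : 0 < ε) (a : ℕ → ℂ) (hfin : (Function.support a).Finite) :
    (μ - ε) * Real.sqrt (∑' n : ℕ, (n : ℝ) ^ 2 * ‖a n‖ ^ 2) ≤
      l2norm (gribovH μ lam a) + (lam ^ 2 / (4 * ε)) * l2norm a := by

  classical
  obtain ⟨N, hN⟩ : ∃ N, ∀ n, N ≤ n → a n = 0 := by
    obtain ⟨m, hm⟩ := hfin.bddAbove
    exact ⟨m + 1, fun n hn => by
      by_contra h
      exact absurd (hm (Function.mem_support.2 h)) (by omega)⟩
  set K := N + 1 with hK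
  set Ha := gribovH μ lam a with hHa
  have hHa0 : ∀ n, K ≤ n → Ha n = 0 := by
    intro n hn
    have h1 : a (n - 1) = 0 := hN _ (by omega)
    have h2 : a n = 0 := hN _ (by omega)
    have h3 : a (n + 1) = 0 := hN _ (by omega)
    simp [hHa, gribovH, show n ≠ 0 by omega, h1, h2, h3]
  set P : ℝ := ∑ n ∈ Finset.range K, (n : ℝ) ^ 2 * ‖a n‖ ^ 2 with hPdef
  set Q : ℝ := ∑ n ∈ Finset.range K, ‖Ha n‖ ^ 2 with hQdef
  set R : ℝ := ∑ n ∈ Finset.range K, ‖a n‖ ^ 2 with hRdef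
  have hPnn : 0 ≤ P := Finset.sum_nonneg fun i _ => by positivity
  -- rewrite tsums as finite sums
  have htP : (∑' n : ℕ, (n : ℝ) ^ 2 * ‖a n‖ ^ 2) = P := by
    refine tsum_eq_sum fun n hn => ?_
    rw [hN n (by simp [Finset.mem_range] at hn; omega)]; simp
  have htQ : l2norm Ha = Real.sqrt Q := by
    rw [l2norm]
    congr 1
    refine tsum_eq_sum fun n hn => ?_
    rw [hHa0 n (by simp [Finset.mem_range] at hn; omega)]; simp
  have htR : l2norm a = Real.sqrt R := by
    rw [l2norm]
    congr 1
    refine tsum_eq_sum fun n hn => ?_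
    rw [hN n (by simp [Finset.mem_range] at hn; omega)]; simp
  rw [htP, htQ, htR]
  -- the coupling term
  set w : ℕ → ℂ := fun n =>
    Complex.I * (lam : ℂ) * (n : ℂ) * (Real.sqrt (n + 1) : ℂ) * a n
      * (starRingEnd ℂ) (a (n + 1)) with hw
  set G : ℂ := ∑ n ∈ Finset.range K, Ha n * (starRingEnd ℂ) ((n : ℂ) * a n) with hG
  -- expand G
  have hexp : ∀ n : ℕ, Ha n * (starRingEnd ℂ) ((n : ℂ) * a n) =
      (Complex.I * (lam : ℂ) * ((n - 1 : ℕ) : ℂ) * (Real.sqrt n : ℂ) * a (n - 1))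
        * (starRingEnd ℂ) ((n : ℂ) * a n)
      + ((μ : ℂ) * (n : ℂ) * a n) * (starRingEnd ℂ) ((n : ℂ) * a n)
      + (Complex.I * (lam : ℂ) * (n : ℂ) * (Real.sqrt (n + 1) : ℂ) * a (n + 1))
        * (starRingEnd ℂ) ((n : ℂ) * a n) := by
    intro n
    rcases n with _ | m
    · simp [hHa, gribovH]
    · simp only [hHa, gribovH, if_neg (Nat.succ_ne_zero m)]; ring
  have hGsplit : G =
      (∑ n ∈ Finset.range K, ((μ : ℂ) * (n : ℂ) * a n) * (starRingEnd ℂ) ((n : ℂ) * a n))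
      + (∑ n ∈ Finset.range K, ((n : ℂ) + 1) * w n)
      + (∑ n ∈ Finset.range K, (-(n : ℂ)) * (starRingEnd ℂ) (w n)) := by
    have h1 : ∑ n ∈ Finset.range K,
        (Complex.I * (lam : ℂ) * ((n - 1 : ℕ) : ℂ) * (Real.sqrt n : ℂ) * a (n - 1))
          * (starRingEnd ℂ) ((n : ℂ) * a n)
        = ∑ n ∈ Finset.range K, ((n : ℂ) + 1) * w n := by
      rw [hK, Finset.sum_range_succ' (fun n =>
        (Complex.I * (lam : ℂ) * ((n - 1 : ℕ) : ℂ) * (Real.sqrt n : ℂ) * a (n - 1))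
          * (starRingEnd ℂ) ((n : ℂ) * a n)) N,
        Finset.sum_range_succ (fun n => ((n : ℂ) + 1) * w n) N]
      have hwN : w N = 0 := by simp [hw, hN N le_rfl]
      rw [hwN]
      simp only [Nat.cast_zero, zero_mul, map_mul, map_zero, mul_zero, add_zero]
      refine Finset.sum_congr rfl fun i _ => ?_
      simp only [hw, Nat.add_sub_cancel, map_mul, Complex.conj_natCast]
      push_cast
      ring
    have h3 : ∀ n : ℕ,
        (Complex.I * (lam : ℂ) * (n : ℂ) * (Real.sqrt (n + 1) : ℂ) * a (n + 1))
          * (starRingEnd ℂ) ((n : ℂ) * a n)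
        = (-(n : ℂ)) * (starRingEnd ℂ) (w n) := by
      intro n
      simp only [hw, map_mul, Complex.conj_natCast, Complex.conj_I, Complex.conj_ofReal,
        RingHom.id_apply, Complex.conj_conj]
      push_cast
      ring
    calc G = ∑ n ∈ Finset.range K,
          ((Complex.I * (lam : ℂ) * ((n - 1 : ℕ) : ℂ) * (Real.sqrt n : ℂ) * a (n - 1))
            * (starRingEnd ℂ) ((n : ℂ) * a n)
          + ((μ : ℂ) * (n : ℂ) * a n) * (starRingEnd ℂ) ((n : ℂ) * a n)
          + (Complex.I * (lam : ℂ) * (n : ℂ) * (Real.sqrt (n + 1) : ℂ) * a (n + 1))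
            * (starRingEnd ℂ) ((n : ℂ) * a n)) := Finset.sum_congr rfl fun n _ => hexp n
      _ = _ := by
          rw [Finset.sum_add_distrib, Finset.sum_add_distrib, h1]
          congr 1
          · ring_nf
          · exact Finset.sum_congr rfl fun n _ => h3 n
  -- real part of G
  have hreG : G.re = μ * P + ∑ n ∈ Finset.range K, (w n).re := by
    rw [hGsplit]
    have hA : (∑ n ∈ Finset.range K,
        ((μ : ℂ) * (n : ℂ) * a n) * (starRingEnd ℂ) ((n : ℂ) * a n)).re = μ * P := by
      rw [Complex.re_sum, hPdef, Finset.mul_sum]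
      refine Finset.sum_congr rfl fun n _ => ?_
      have : ((μ : ℂ) * (n : ℂ) * a n) * (starRingEnd ℂ) ((n : ℂ) * a n)
          = ((μ : ℝ) : ℂ) * ((n : ℝ) : ℂ) ^ 2 * (a n * (starRingEnd ℂ) (a n)) := by
        simp only [map_mul, Complex.conj_natCast]
        push_cast
        ring
      rw [this, Complex.mul_conj]
      have : ((μ : ℝ) : ℂ) * ((n : ℝ) : ℂ) ^ 2 * ((Complex.normSq (a n) : ℝ) : ℂ)
          = (((μ * (n : ℝ) ^ 2 * Complex.normSq (a n)) : ℝ) : ℂ) := by push_cast; ring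
      rw [this, Complex.ofReal_re, Complex.normSq_eq_norm_sq]
      ring
    have hB : ∀ n : ℕ, (((n : ℂ) + 1) * w n + (-(n : ℂ)) * (starRingEnd ℂ) (w n)).re
        = (w n).re := by
      intro n
      simp [Complex.add_re, Complex.mul_re, Complex.conj_re, Complex.conj_im]
      ring
    rw [Complex.add_re, Complex.add_re, hA, Complex.re_sum, Complex.re_sum, add_assoc,
      ← Finset.sum_add_distrib]
    congr 1
    refine Finset.sum_congr rfl fun n _ => ?_
    rw [← Complex.add_re]; exact hB n
  -- bound on G.re via Cauchy-Schwarz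
  have hPe : ∑ n ∈ Finset.range K, ((n : ℝ) * ‖a n‖) ^ 2 = P :=
    Finset.sum_congr rfl fun n _ => by ring
  have hGle : G.re ≤ Real.sqrt Q * Real.sqrt P := by
    have h1 : G.re ≤ ‖G‖ := Complex.re_le_norm G
    have h2 : ‖G‖ ≤ ∑ n ∈ Finset.range K, ‖Ha n‖ * ((n : ℝ) * ‖a n‖) := by
      refine le_trans (norm_sum_le _ _) (le_of_eq (Finset.sum_congr rfl fun n _ => ?_))
      rw [norm_mul, Complex.norm_conj, norm_mul, Complex.norm_natCast]
    have h3 := cs_sqrt (Finset.range K) (fun n => ‖Ha n‖) (fun n => (n : ℝ) * ‖a n‖)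
    rw [hPe] at h3
    calc G.re ≤ ‖G‖ := h1
      _ ≤ ∑ n ∈ Finset.range K, ‖Ha n‖ * ((n : ℝ) * ‖a n‖) := h2
      _ ≤ Real.sqrt Q * Real.sqrt P := h3
  -- bound on the coupling term
  set c : ℝ := lam ^ 2 / (4 * ε) with hc
  have hcnn : 0 ≤ c := by positivity
  have step1 : ∀ n : ℕ, |(w n).re| ≤
      ε * ((n : ℝ) ^ 2 * ‖a n‖ ^ 2) + c * (((n : ℝ) + 1) * ‖a (n + 1)‖ ^ 2) := by
    intro n
    have habs : ‖w n‖
        = |lam| * (((n : ℝ) * ‖a n‖) * (Real.sqrt ((n : ℝ) + 1) * ‖a (n + 1)‖)) := by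
      simp only [hw, norm_mul, Complex.norm_I, Complex.norm_natCast, Complex.norm_conj,
        Complex.norm_real, Real.norm_eq_abs, abs_of_nonneg (Real.sqrt_nonneg ((n:ℝ)+1))]
      ring
    calc |(w n).re| ≤ ‖w n‖ := Complex.abs_re_le_norm _
      _ = |lam| * (((n : ℝ) * ‖a n‖) * (Real.sqrt ((n : ℝ) + 1) * ‖a (n + 1)‖)) := habs
      _ ≤ ε * ((n : ℝ) * ‖a n‖) ^ 2 + c * (Real.sqrt ((n : ℝ) + 1) * ‖a (n + 1)‖) ^ 2 :=
          young_ineq ε lam _ _ hε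
      _ = ε * ((n : ℝ) ^ 2 * ‖a n‖ ^ 2) + c * (((n : ℝ) + 1) * ‖a (n + 1)‖ ^ 2) := by
          rw [mul_pow, mul_pow, Real.sq_sqrt (by positivity : (0:ℝ) ≤ (n : ℝ) + 1)]
          try ring
  have step2 : ∑ n ∈ Finset.range K, (((n : ℝ) + 1) * ‖a (n + 1)‖ ^ 2)
      = ∑ n ∈ Finset.range K, (n : ℝ) * ‖a n‖ ^ 2 := by
    have h0 := Finset.sum_range_succ' (fun n => (n : ℝ) * ‖a n‖ ^ 2) K
    have h1 := Finset.sum_range_succ (fun n => (n : ℝ) * ‖a n‖ ^ 2) K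
    have haK : a K = 0 := hN _ (by omega)
    rw [h1, haK] at h0
    simp only [norm_zero, Nat.cast_zero, zero_mul, ne_eq, zero_pow, mul_zero, add_zero] at h0
    calc ∑ n ∈ Finset.range K, (((n : ℝ) + 1) * ‖a (n + 1)‖ ^ 2)
        = ∑ n ∈ Finset.range K, (((n + 1 : ℕ) : ℝ) * ‖a (n + 1)‖ ^ 2) := by
          refine Finset.sum_congr rfl fun n _ => ?_; push_cast; ring
      _ = ∑ n ∈ Finset.range K, (n : ℝ) * ‖a n‖ ^ 2 := by
          rw [← h0]
          simp
  have step3 : ∑ n ∈ Finset.range K, (n : ℝ) * ‖a n‖ ^ 2 ≤ Real.sqrt P * Real.sqrt R := by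
    have h := cs_sqrt (Finset.range K) (fun n => (n : ℝ) * ‖a n‖) (fun n => ‖a n‖)
    rw [hPe] at h
    calc ∑ n ∈ Finset.range K, (n : ℝ) * ‖a n‖ ^ 2
        = ∑ n ∈ Finset.range K, ((n : ℝ) * ‖a n‖) * ‖a n‖ :=
          Finset.sum_congr rfl fun n _ => by ring
      _ ≤ Real.sqrt P * Real.sqrt R := h
  have hwsum : ∑ n ∈ Finset.range K, |(w n).re|
      ≤ ε * P + c * (Real.sqrt P * Real.sqrt R) := by
    calc ∑ n ∈ Finset.range K, |(w n).re|
        ≤ ∑ n ∈ Finset.range K,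
            (ε * ((n : ℝ) ^ 2 * ‖a n‖ ^ 2) + c * (((n : ℝ) + 1) * ‖a (n + 1)‖ ^ 2)) :=
          Finset.sum_le_sum fun n _ => step1 n
      _ = ε * P + c * ∑ n ∈ Finset.range K, (((n : ℝ) + 1) * ‖a (n + 1)‖ ^ 2) := by
          rw [Finset.sum_add_distrib, ← Finset.mul_sum, ← Finset.mul_sum, hPdef]
      _ = ε * P + c * ∑ n ∈ Finset.range K, (n : ℝ) * ‖a n‖ ^ 2 := by rw [step2]
      _ ≤ ε * P + c * (Real.sqrt P * Real.sqrt R) :=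
          add_le_add_right (mul_le_mul_of_nonneg_left step3 hcnn) _
  -- combine
  have habs_sum := Finset.abs_sum_le_sum_abs (fun n => (w n).re) (Finset.range K)
  have hneg : -(∑ n ∈ Finset.range K, (w n).re) ≤ ε * P + c * (Real.sqrt P * Real.sqrt R) :=
    le_trans (neg_le_abs _) (le_trans habs_sum hwsum)
  have key : μ * P ≤ Real.sqrt Q * Real.sqrt P + (ε * P + c * (Real.sqrt P * Real.sqrt R)) := by
    have : μ * P = G.re - ∑ n ∈ Finset.range K, (w n).re := by linarith [hreG]
    linarith
  have hsq : Real.sqrt P * Real.sqrt P = P := Real.mul_self_sqrt hPnn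
  by_cases h0 : Real.sqrt P = 0
  · rw [h0, mul_zero]
    exact add_nonneg (Real.sqrt_nonneg _) (mul_nonneg hcnn (Real.sqrt_nonneg _))
  · have hpos : 0 < Real.sqrt P := (Real.sqrt_nonneg P).lt_of_ne (Ne.symm h0)
    have hmain : ((μ - ε) * Real.sqrt P) * Real.sqrt P
        ≤ (Real.sqrt Q + c * Real.sqrt R) * Real.sqrt P := by
      have e1 : ((μ - ε) * Real.sqrt P) * Real.sqrt P = μ * P - ε * P := by
        rw [mul_assoc, hsq]; ring
      have e2 : (Real.sqrt Q + c * Real.sqrt R) * Real.sqrt P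
          = Real.sqrt Q * Real.sqrt P + c * (Real.sqrt P * Real.sqrt R) := by ring
      rw [e1, e2]
      linarith
    exact le_of_mul_le_mul_right hmain hpos
end

section
/- Let λ' > 0, λ > 0, μ > 0, and set ρ' = λ/λ', ρ = μ/λ, δ = ρ'(ρ + ρ') − 1, and assume δ ≥ 0. Define Θ(x) = ∫_0^x e^{−ρ's}·(1 − s/ρ')^{−(δ+1)} ds for 0 ≤ x < ρ' and the weight r(y) = e^{2ρ'y}·(1 − y/ρ')^{2δ}. Then the double integral ∫_0^{ρ'} ∫_0^{ρ'} Θ(min(y, y₁))²/(λ² y₁²) · r(y) dy dy₁ is finite. -/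
open MeasureTheory

/-- `Θ(x) = ∫₀ˣ e^{−ρ's}·(1 − s/ρ')^{−(δ+1)} ds`. -/
noncomputable def ThetaInt (ρ' δ : ℝ) (x : ℝ) : ℝ :=
  ∫ s in Set.Ioc (0 : ℝ) x, Real.exp (-ρ' * s) * (1 - s / ρ') ^ (-(δ + 1))

/-- The weight `r(y) = e^{2ρ'y}·(1 − y/ρ')^{2δ}`. -/
noncomputable def rWeight (ρ' δ : ℝ) (y : ℝ) : ℝ :=
  Real.exp (2 * ρ' * y) * (1 - y / ρ') ^ (2 * δ)

namespace GribovHS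

open Set

/-- The integrand of `ThetaInt` is integrable on `Ioc 0 m` for `m < ρ'`. -/
lemma integrableOn_kernel {ρ' δ : ℝ} (hρ : 0 < ρ') {m : ℝ} (hmρ : m < ρ') :
    IntegrableOn (fun s : ℝ => Real.exp (-ρ' * s) * (1 - s / ρ') ^ (-(δ + 1)))
      (Set.Ioc 0 m) := by
  have hcont : ContinuousOn
      (fun s : ℝ => Real.exp (-ρ' * s) * (1 - s / ρ') ^ (-(δ + 1))) (Set.Icc 0 m) := by
    apply ContinuousOn.mul
    · exact (Real.continuous_exp.comp (continuous_const.mul continuous_id)).continuousOn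
    · apply ContinuousOn.rpow_const
      · exact continuousOn_const.sub (continuous_id.continuousOn.div_const ρ')
      · intro x hx
        left
        have hx2 : x / ρ' < 1 := (div_lt_one hρ).2 (lt_of_le_of_lt hx.2 hmρ)
        intro h
        nlinarith
  exact (hcont.integrableOn_Icc).mono_set Set.Ioc_subset_Icc_self

/-- Pure power integrand is integrable on `Icc 0 m` for `m < ρ'`. -/
lemma integrableOn_rpow_aux {ρ' : ℝ} (hρ : 0 < ρ') {m : ℝ} (hmρ : m < ρ') (q : ℝ) :
    IntegrableOn (fun s : ℝ => (1 - s / ρ') ^ q) (Set.Icc 0 m) := by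
  have hcont : ContinuousOn (fun s : ℝ => (1 - s / ρ') ^ q) (Set.Icc 0 m) := by
    apply ContinuousOn.rpow_const
    · exact continuousOn_const.sub (continuous_id.continuousOn.div_const ρ')
    · intro x hx
      left
      have hx2 : x / ρ' < 1 := (div_lt_one hρ).2 (lt_of_le_of_lt hx.2 hmρ)
      intro h
      nlinarith
  exact hcont.integrableOn_Icc

lemma integral_rpow_eq {ρ' : ℝ} (hρ : 0 < ρ') {β m : ℝ} (hβ : 0 < β) (hm : 0 ≤ m)
    (hmρ : m < ρ') :
    ∫ s in Set.Ioc (0:ℝ) m, (1 - s / ρ') ^ (-(β + 1))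
      = ρ' / β * ((1 - m / ρ') ^ (-β) - 1) := by
  rw [← intervalIntegral.integral_of_le hm]
  have key : ∀ t ∈ Set.uIcc (0:ℝ) m,
      HasDerivAt (fun s : ℝ => ρ' / β * (1 - s / ρ') ^ (-β))
        ((1 - t / ρ') ^ (-(β + 1))) t := by
    intro t ht
    rw [Set.uIcc_of_le hm] at ht
    have hu : (0:ℝ) < 1 - t / ρ' := by
      have : t / ρ' < 1 := (div_lt_one hρ).2 (lt_of_le_of_lt ht.2 hmρ)
      linarith
    have h1 : HasDerivAt (fun s : ℝ => 1 - s / ρ') (-(1 / ρ')) t := by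
      simpa using ((hasDerivAt_id t).div_const ρ').const_sub 1
    have h2 : HasDerivAt (fun x : ℝ => x ^ (-β))
        (-β * (1 - t / ρ') ^ (-β - 1)) (1 - t / ρ') :=
      Real.hasDerivAt_rpow_const (Or.inl hu.ne')
    have h3 := (h2.comp t h1).const_mul (ρ' / β)
    refine h3.congr_deriv ?_
    rw [show -β - 1 = -(β + 1) by ring]
    have hβ' : β ≠ 0 := hβ.ne'
    have hρ'' : ρ' ≠ 0 := hρ.ne'
    field_simp
  have hint : IntervalIntegrable (fun s : ℝ => (1 - s / ρ') ^ (-(β + 1))) volume 0 m :=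
    (intervalIntegrable_iff_integrableOn_Ioc_of_le hm).2
      ((integrableOn_rpow_aux hρ hmρ _).mono_set Set.Ioc_subset_Icc_self)
  rw [intervalIntegral.integral_eq_sub_of_hasDerivAt key hint]
  simp only [zero_div, sub_zero, Real.one_rpow]
  ring

lemma thetaInt_nonneg {ρ' δ : ℝ} (hρ : 0 < ρ') {x : ℝ} (hx : x ≤ ρ') :
    0 ≤ ThetaInt ρ' δ x := by
  apply setIntegral_nonneg measurableSet_Ioc
  intro s hs
  have h1 : 0 ≤ 1 - s / ρ' := by
    have : s / ρ' ≤ 1 := (div_le_one hρ).2 (hs.2.trans hx)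
    linarith
  exact mul_nonneg (Real.exp_pos _).le (Real.rpow_nonneg h1 _)

lemma thetaInt_le_rpow {ρ' δ : ℝ} (hρ : 0 < ρ') (hδ : 0 ≤ δ) {m : ℝ} (hm : 0 ≤ m)
    (hmρ : m < ρ') :
    ThetaInt ρ' δ m ≤ ρ' / (δ + 1/8) * (1 - m / ρ') ^ (-(δ + 1/8)) := by
  have hβ : (0:ℝ) < δ + 1/8 := by linarith
  have step1 : ThetaInt ρ' δ m ≤ ∫ s in Set.Ioc (0:ℝ) m, (1 - s / ρ') ^ (-(δ + 1/8 + 1)) := by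
    apply setIntegral_mono_on (integrableOn_kernel hρ hmρ)
      ((integrableOn_rpow_aux hρ hmρ _).mono_set Set.Ioc_subset_Icc_self)
      measurableSet_Ioc
    intro s hs
    have hb0 : 0 < 1 - s / ρ' := by
      have : s / ρ' < 1 := (div_lt_one hρ).2 (lt_of_le_of_lt hs.2 hmρ)
      linarith
    have hb1 : 1 - s / ρ' ≤ 1 := by
      have : 0 ≤ s / ρ' := div_nonneg hs.1.le hρ.le
      linarith
    calc Real.exp (-ρ' * s) * (1 - s / ρ') ^ (-(δ + 1))
        ≤ 1 * (1 - s / ρ') ^ (-(δ + 1)) := by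
          apply mul_le_mul_of_nonneg_right _ (Real.rpow_nonneg hb0.le _)
          rw [Real.exp_le_one_iff]
          nlinarith [hs.1]
      _ = (1 - s / ρ') ^ (-(δ + 1)) := one_mul _
      _ ≤ (1 - s / ρ') ^ (-(δ + 1/8 + 1)) :=
          Real.rpow_le_rpow_of_exponent_ge hb0 hb1 (by linarith)
  rw [integral_rpow_eq hρ hβ hm hmρ] at step1
  have step2 : ρ' / (δ + 1/8) * ((1 - m / ρ') ^ (-(δ + 1/8)) - 1)
      ≤ ρ' / (δ + 1/8) * (1 - m / ρ') ^ (-(δ + 1/8)) :=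
    mul_le_mul_of_nonneg_left (sub_le_self _ zero_le_one) (div_pos hρ hβ).le
  linarith

lemma thetaInt_le_linear {ρ' δ : ℝ} (hρ : 0 < ρ') (hδ : 0 ≤ δ) {m : ℝ} (hm : 0 ≤ m)
    (hm2 : m ≤ ρ' / 2) :
    ThetaInt ρ' δ m ≤ 2 ^ (δ + 1) * m := by
  have hmρ : m < ρ' := by linarith
  have step : ThetaInt ρ' δ m ≤ ∫ _ in Set.Ioc (0:ℝ) m, (2:ℝ) ^ (δ + 1) := by
    apply setIntegral_mono_on (integrableOn_kernel hρ hmρ)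
      (integrableOn_const (by rw [Real.volume_Ioc]; exact ENNReal.ofReal_ne_top))
      measurableSet_Ioc
    intro s hs
    have hb0 : 0 < 1 - s / ρ' := by
      have : s / ρ' < 1 := (div_lt_one hρ).2 (lt_of_le_of_lt hs.2 hmρ)
      linarith
    have hbhalf : 1/2 ≤ 1 - s / ρ' := by
      have : s / ρ' ≤ 1/2 := by
        rw [div_le_iff₀ hρ]
        nlinarith [hs.2]
      linarith
    calc Real.exp (-ρ' * s) * (1 - s / ρ') ^ (-(δ + 1))
        ≤ 1 * (1 - s / ρ') ^ (-(δ + 1)) := by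
          apply mul_le_mul_of_nonneg_right _ (Real.rpow_nonneg hb0.le _)
          rw [Real.exp_le_one_iff]
          nlinarith [hs.1]
      _ = (1 - s / ρ') ^ (-(δ + 1)) := one_mul _
      _ ≤ ((1:ℝ)/2) ^ (-(δ + 1)) :=
          Real.rpow_le_rpow_of_nonpos (by norm_num) hbhalf (by linarith)
      _ = 2 ^ (δ + 1) := by
          rw [one_div, Real.inv_rpow (by norm_num : (0:ℝ) ≤ 2),
            Real.rpow_neg (by norm_num : (0:ℝ) ≤ 2), inv_inv]
  rw [setIntegral_const, Real.volume_real_Ioc_of_le hm, sub_zero,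
    smul_eq_mul] at step
  linarith [step, mul_comm m ((2:ℝ) ^ (δ + 1))]

lemma measurable_thetaInt (ρ' δ : ℝ) : Measurable (ThetaInt ρ' δ) := by
  set g : ℝ → ℝ := fun s => Real.exp (-ρ' * s) * (1 - s / ρ') ^ (-(δ + 1)) with hg
  have hgm : Measurable g := by
    apply Measurable.mul
    · exact (Real.continuous_exp.measurable).comp (measurable_const.mul measurable_id)
    · exact (measurable_const.sub (measurable_id.div_const ρ')).pow measurable_const
  set F : ℝ × ℝ → ℝ := fun p => Set.indicator (Set.Ioc (0:ℝ) p.1) g p.2 with hF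
  have hFm : Measurable F := by
    have hset : MeasurableSet {p : ℝ × ℝ | 0 < p.2 ∧ p.2 ≤ p.1} :=
      (measurableSet_lt measurable_const measurable_snd).inter
        (measurableSet_le measurable_snd measurable_fst)
    have : F = fun p : ℝ × ℝ => if (0 < p.2 ∧ p.2 ≤ p.1) then g p.2 else 0 := by
      funext p
      simp [hF, Set.indicator_apply, Set.mem_Ioc]
    rw [this]
    exact Measurable.ite hset (hgm.comp measurable_snd) measurable_const
  have hsm := hFm.stronglyMeasurable.integral_prod_right' (ν := volume)
  have heq : ThetaInt ρ' δ = fun x => ∫ s, F (x, s) := by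
    funext x
    rw [ThetaInt, ← integral_indicator measurableSet_Ioc]
  rw [heq]
  exact hsm.measurable

lemma integrableOn_quarter {ρ' : ℝ} (hρ : 0 < ρ') :
    IntegrableOn (fun y : ℝ => (1 - y / ρ') ^ (-(1/4 : ℝ))) (Set.Ioc 0 ρ') := by
  have h1 : IntervalIntegrable (fun x : ℝ => x ^ (-(1/4:ℝ))) volume 0 ρ' :=
    intervalIntegral.intervalIntegrable_rpow' (by norm_num)
  have h2 := (h1.comp_sub_left ρ').symm
  have h4 : IntegrableOn (fun x : ℝ => (ρ' - x) ^ (-(1/4:ℝ))) (Set.Ioc 0 ρ') := by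
    rw [← intervalIntegrable_iff_integrableOn_Ioc_of_le hρ.le]
    simpa using h2
  have h5 : IntegrableOn
      (fun x : ℝ => (ρ' - x) ^ (-(1/4:ℝ)) * (ρ' ^ (-(1/4:ℝ)))⁻¹) (Set.Ioc 0 ρ') :=
    h4.mul_const _
  apply h5.congr_fun _ measurableSet_Ioc
  intro y hy
  have hy1 : 0 ≤ ρ' - y := by linarith [hy.2]
  show (ρ' - y) ^ (-(1/4:ℝ)) * (ρ' ^ (-(1/4:ℝ)))⁻¹ = (1 - y / ρ') ^ (-(1/4:ℝ))
  rw [show 1 - y / ρ' = (ρ' - y) / ρ' by field_simp,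
    Real.div_rpow hy1 hρ.le]
  ring

end GribovHS

set_option maxHeartbeats 1000000 in
/-- For `λ' > 0`, `λ > 0`, `μ > 0`, with `ρ' = λ/λ'`, `ρ = μ/λ`,
`δ = ρ'(ρ+ρ') − 1 ≥ 0`, the double integral
`∫₀^{ρ'} ∫₀^{ρ'} Θ(min(y,y₁))²/(λ²y₁²)·r(y) dy dy₁` is finite
(the inverse of the regularized Gribov operator is Hilbert–Schmidt on
`L²([0,ρ'], r(y)dy)`). -/
theorem regularized_inverse_hilbert_schmidt (lam' lam μ ρ' ρ δ : ℝ)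
    (hlam' : 0 < lam') (hlam : 0 < lam) (hμ : 0 < μ)
    (hρ' : ρ' = lam / lam') (hρ : ρ = μ / lam) (hδ : δ = ρ' * (ρ + ρ') - 1)
    (hδ0 : 0 ≤ δ) :
    IntegrableOn
      (fun p : ℝ × ℝ =>
        (ThetaInt ρ' δ (min p.1 p.2)) ^ 2 / (lam ^ 2 * p.2 ^ 2) * rWeight ρ' δ p.1)
      (Set.Ioc 0 ρ' ×ˢ Set.Ioc 0 ρ') := by
  have hρ0 : 0 < ρ' := hρ' ▸ div_pos hlam hlam'
  -- constants
  set c : ℝ := ρ' / (δ + 1/8) with hc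
  have hc0 : 0 < c := div_pos hρ0 (by linarith)
  set K₁ : ℝ := (2 ^ (δ + 1)) ^ 2 * Real.exp (2 * ρ' * ρ') / lam ^ 2 with hK₁
  set K₂ : ℝ := c ^ 2 * Real.exp (2 * ρ' * ρ') * 4 / (lam ^ 2 * ρ' ^ 2) with hK₂
  have hK₁0 : 0 ≤ K₁ := by rw [hK₁]; positivity
  have hK₂0 : 0 ≤ K₂ := by rw [hK₂]; positivity
  clear_value c K₁ K₂
  -- the dominating function
  set g : ℝ × ℝ → ℝ := fun p =>
    K₁ + K₂ * ((1 - p.1 / ρ') ^ (-(1/4:ℝ)) + (1 - p.2 / ρ') ^ (-(1/4:ℝ))) with hgdef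
  -- integrability of g
  have hvol : volume (Set.Ioc (0:ℝ) ρ') < ⊤ := by
    rw [Real.volume_Ioc]; exact ENNReal.ofReal_lt_top
  have hginteg : IntegrableOn g (Set.Ioc 0 ρ' ×ˢ Set.Ioc 0 ρ') := by
    have hq := GribovHS.integrableOn_quarter hρ0
    have hprodrw : (volume : Measure (ℝ × ℝ)).restrict (Set.Ioc 0 ρ' ×ˢ Set.Ioc 0 ρ')
        = (volume.restrict (Set.Ioc 0 ρ')).prod (volume.restrict (Set.Ioc 0 ρ')) := by
      rw [MeasureTheory.Measure.volume_eq_prod, Measure.prod_restrict]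
    rw [IntegrableOn, hprodrw]
    have hfin : IsFiniteMeasure (volume.restrict (Set.Ioc (0:ℝ) ρ')) :=
      ⟨by rwa [Measure.restrict_apply_univ]⟩
    have hconst1 : Integrable (fun _ : ℝ => (1:ℝ)) (volume.restrict (Set.Ioc (0:ℝ) ρ')) :=
      integrable_const _
    have h1 : Integrable (fun p : ℝ × ℝ => (1 - p.1 / ρ') ^ (-(1/4:ℝ)))
        ((volume.restrict (Set.Ioc (0:ℝ) ρ')).prod (volume.restrict (Set.Ioc (0:ℝ) ρ'))) := by
      have := hq.mul_prod hconst1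
      simpa using this
    have h2 : Integrable (fun p : ℝ × ℝ => (1 - p.2 / ρ') ^ (-(1/4:ℝ)))
        ((volume.restrict (Set.Ioc (0:ℝ) ρ')).prod (volume.restrict (Set.Ioc (0:ℝ) ρ'))) := by
      have := hconst1.mul_prod hq
      simpa using this
    have h3 : Integrable (fun _ : ℝ × ℝ => K₁)
        ((volume.restrict (Set.Ioc (0:ℝ) ρ')).prod (volume.restrict (Set.Ioc (0:ℝ) ρ'))) :=
      integrable_const _
    exact h3.add (((h1.add h2)).const_mul K₂)
  -- measurability of the integrand
  have hFmeas : AEStronglyMeasurable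
      (fun p : ℝ × ℝ =>
        (ThetaInt ρ' δ (min p.1 p.2)) ^ 2 / (lam ^ 2 * p.2 ^ 2) * rWeight ρ' δ p.1)
      (volume.restrict (Set.Ioc 0 ρ' ×ˢ Set.Ioc 0 ρ')) := by
    apply Measurable.aestronglyMeasurable
    apply Measurable.mul
    · apply Measurable.div
      · exact ((GribovHS.measurable_thetaInt ρ' δ).comp
          (measurable_fst.min measurable_snd)).pow measurable_const
      · exact measurable_const.mul (measurable_snd.pow measurable_const)
    · unfold rWeight
      apply Measurable.mul
      · exact (Real.continuous_exp.measurable).comp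
          ((measurable_const.mul measurable_fst))
      · exact ((measurable_const.sub (measurable_fst.div_const ρ')).pow measurable_const)
  -- the a.e. bound
  apply Integrable.mono' hginteg hFmeas
  have hnull : (volume : Measure (ℝ × ℝ)) ({ρ'} ×ˢ {ρ'} : Set (ℝ × ℝ)) = 0 := by
    rw [MeasureTheory.Measure.volume_eq_prod, Measure.prod_prod]
    simp
  have hae : ∀ᵐ p : ℝ × ℝ ∂(volume.restrict (Set.Ioc 0 ρ' ×ˢ Set.Ioc 0 ρ')),
      p ∉ ({ρ'} ×ˢ {ρ'} : Set (ℝ × ℝ)) := by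
    apply ae_restrict_of_ae
    rw [MeasureTheory.ae_iff]
    simpa using hnull
  filter_upwards [ae_restrict_mem ((measurableSet_Ioc.prod measurableSet_Ioc)), hae]
    with p hp hpne
  obtain ⟨hp1, hp2⟩ := hp
  set y := p.1
  set y₁ := p.2
  set m := min y y₁ with hm
  have hp_eq : p = (y, y₁) := rfl
  clear_value y y₁ m
  rw [hp_eq] at hpne
  have hy0 : 0 < y := hp1.1
  have hyρ : y ≤ ρ' := hp1.2
  have hy₁0 : 0 < y₁ := hp2.1
  have hy₁ρ : y₁ ≤ ρ' := hp2.2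
  have hm0 : 0 < m := by rw [hm]; exact lt_min hy0 hy₁0
  have hmy : m ≤ y := by rw [hm]; exact min_le_left _ _
  have hmy₁ : m ≤ y₁ := by rw [hm]; exact min_le_right _ _
  have hmρ : m < ρ' := by
    rcases lt_or_eq_of_le (le_trans hmy hyρ) with h | h
    · exact h
    · exfalso
      apply hpne
      have hyeq : y = ρ' := le_antisymm hyρ (by rw [← h]; exact hmy)
      have hy₁eq : y₁ = ρ' := le_antisymm hy₁ρ (by rw [← h]; exact hmy₁)
      exact Set.mem_prod.2 ⟨Set.mem_singleton_iff.2 hyeq, Set.mem_singleton_iff.2 hy₁eq⟩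

  -- positivity facts
  have hΘ0 : 0 ≤ ThetaInt ρ' δ m := GribovHS.thetaInt_nonneg hρ0 (le_of_lt hmρ)
  have hum : 0 < 1 - m / ρ' := by
    have : m / ρ' < 1 := (div_lt_one hρ0).2 hmρ
    linarith
  have huy : 0 ≤ 1 - y / ρ' := by
    have : y / ρ' ≤ 1 := (div_le_one hρ0).2 hyρ
    linarith
  have huy₁ : 0 ≤ 1 - y₁ / ρ' := by
    have : y₁ / ρ' ≤ 1 := (div_le_one hρ0).2 hy₁ρ
    linarith
  have hyd : 0 ≤ y / ρ' := div_nonneg hy0.le hρ0.le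
  have hy₁d : 0 ≤ y₁ / ρ' := div_nonneg hy₁0.le hρ0.le
  have hrw_nonneg : 0 ≤ rWeight ρ' δ y :=
    mul_nonneg (Real.exp_pos _).le (Real.rpow_nonneg huy _)
  have hF_nonneg : 0 ≤ (ThetaInt ρ' δ m) ^ 2 / (lam ^ 2 * y₁ ^ 2) * rWeight ρ' δ y := by
    apply mul_nonneg _ hrw_nonneg
    positivity
  rw [Real.norm_eq_abs, abs_of_nonneg hF_nonneg]
  have hgterm : 0 ≤ (1 - y / ρ') ^ (-(1/4:ℝ)) + (1 - y₁ / ρ') ^ (-(1/4:ℝ)) :=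
    add_nonneg (Real.rpow_nonneg huy _) (Real.rpow_nonneg huy₁ _)
  -- the weight bound used in both cases
  have hrw_le : rWeight ρ' δ y ≤ Real.exp (2 * ρ' * ρ') * (1 - m / ρ') ^ (2 * δ) := by
    unfold rWeight
    apply mul_le_mul
    · exact Real.exp_le_exp.2 (by nlinarith [mul_le_mul_of_nonneg_left hyρ hρ0.le])
    · apply Real.rpow_le_rpow huy _ (by linarith)
      have : m / ρ' ≤ y / ρ' := (div_le_div_iff_of_pos_right hρ0).2 hmy
      linarith
    · exact Real.rpow_nonneg huy _
    · exact (Real.exp_pos _).le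
  rcases le_or_gt m (ρ' / 2) with hcase | hcase
  · -- case m ≤ ρ'/2 : use linear bound
    have hΘle : ThetaInt ρ' δ m ≤ 2 ^ (δ + 1) * m :=
      GribovHS.thetaInt_le_linear hρ0 hδ0 hm0.le hcase
    have hΘsq : (ThetaInt ρ' δ m) ^ 2 ≤ (2 ^ (δ + 1)) ^ 2 * y₁ ^ 2 := by
      have h1 : ThetaInt ρ' δ m ≤ 2 ^ (δ + 1) * y₁ := by
        apply hΘle.trans
        apply mul_le_mul_of_nonneg_left hmy₁ (Real.rpow_nonneg (by norm_num) _)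
      calc (ThetaInt ρ' δ m) ^ 2 ≤ (2 ^ (δ + 1) * y₁) ^ 2 := by
            apply pow_le_pow_left₀ hΘ0 h1
        _ = (2 ^ (δ + 1)) ^ 2 * y₁ ^ 2 := by ring
    have hrb : rWeight ρ' δ y ≤ Real.exp (2 * ρ' * ρ') := by
      unfold rWeight
      calc Real.exp (2 * ρ' * y) * (1 - y / ρ') ^ (2 * δ)
          ≤ Real.exp (2 * ρ' * ρ') * 1 := by
            apply mul_le_mul
            · exact Real.exp_le_exp.2 (by nlinarith [mul_le_mul_of_nonneg_left hyρ hρ0.le])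
            · exact Real.rpow_le_one huy (by linarith) (by linarith)
            · exact Real.rpow_nonneg huy _
            · exact (Real.exp_pos _).le
        _ = Real.exp (2 * ρ' * ρ') := mul_one _
    have hdivle : (ThetaInt ρ' δ m) ^ 2 / (lam ^ 2 * y₁ ^ 2) ≤ (2 ^ (δ + 1)) ^ 2 / lam ^ 2 := by
      rw [div_le_div_iff₀ (by positivity) (by positivity)]
      calc (ThetaInt ρ' δ m) ^ 2 * lam ^ 2 ≤ ((2 ^ (δ + 1)) ^ 2 * y₁ ^ 2) * lam ^ 2 := by
            apply mul_le_mul_of_nonneg_right hΘsq (by positivity)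
        _ = (2 ^ (δ + 1)) ^ 2 * (lam ^ 2 * y₁ ^ 2) := by ring
    calc (ThetaInt ρ' δ m) ^ 2 / (lam ^ 2 * y₁ ^ 2) * rWeight ρ' δ y
        ≤ ((2 ^ (δ + 1)) ^ 2 / lam ^ 2) * Real.exp (2 * ρ' * ρ') := by
          apply mul_le_mul hdivle hrb hrw_nonneg (by positivity)
      _ = K₁ := by rw [hK₁]; ring
      _ ≤ g p := by
          have hgp : g p = K₁ + K₂ * ((1 - y / ρ') ^ (-(1/4:ℝ)) + (1 - y₁ / ρ') ^ (-(1/4:ℝ))) := by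
            rw [hp_eq]
          rw [hgp]
          linarith [mul_nonneg hK₂0 hgterm]
  · -- case ρ'/2 < m
    have hy₁half : ρ' / 2 < y₁ := lt_of_lt_of_le hcase hmy₁
    have hΘle : ThetaInt ρ' δ m ≤ c * (1 - m / ρ') ^ (-(δ + 1/8)) := by
      rw [hc]; exact GribovHS.thetaInt_le_rpow hρ0 hδ0 hm0.le hmρ
    have hΘsq : (ThetaInt ρ' δ m) ^ 2 ≤ c ^ 2 * (1 - m / ρ') ^ (-(2*δ + 1/4)) := by
      have h1 : (ThetaInt ρ' δ m) ^ 2 ≤ (c * (1 - m / ρ') ^ (-(δ + 1/8))) ^ 2 :=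
        pow_le_pow_left₀ hΘ0 hΘle 2
      have h3 : (1 - m / ρ') ^ (-(δ + 1/8)) * (1 - m / ρ') ^ (-(δ + 1/8))
          = (1 - m / ρ') ^ (-(2*δ + 1/4)) := by
        rw [← Real.rpow_add hum, show -(δ + 1/8) + -(δ + 1/8) = -(2*δ + 1/4) by ring]
      have h2 : (c * (1 - m / ρ') ^ (-(δ + 1/8))) ^ 2
          = c ^ 2 * (1 - m / ρ') ^ (-(2*δ + 1/4)) := by
        rw [← h3]; ring
      linarith
    have key : (ThetaInt ρ' δ m) ^ 2 * (1 - m / ρ') ^ (2 * δ)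
        ≤ c ^ 2 * (1 - m / ρ') ^ (-(1/4:ℝ)) := by
      calc (ThetaInt ρ' δ m) ^ 2 * (1 - m / ρ') ^ (2 * δ)
          ≤ c ^ 2 * (1 - m / ρ') ^ (-(2*δ + 1/4)) * (1 - m / ρ') ^ (2 * δ) := by
            apply mul_le_mul_of_nonneg_right hΘsq (Real.rpow_nonneg hum.le _)
        _ = c ^ 2 * (1 - m / ρ') ^ (-(1/4:ℝ)) := by
            rw [mul_assoc, ← Real.rpow_add hum,
              show -(2*δ + 1/4) + 2 * δ = -(1/4:ℝ) by ring]
    have hy₁sq : 1 / (lam ^ 2 * y₁ ^ 2) ≤ 4 / (lam ^ 2 * ρ' ^ 2) := by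
      have h0 : ρ' ^ 2 ≤ 4 * y₁ ^ 2 := by nlinarith [hy₁half, hρ0]
      rw [div_le_div_iff₀ (by positivity) (by positivity)]
      nlinarith [mul_le_mul_of_nonneg_left h0 (sq_nonneg lam)]
    have hmin_le : (1 - m / ρ') ^ (-(1/4:ℝ))
        ≤ (1 - y / ρ') ^ (-(1/4:ℝ)) + (1 - y₁ / ρ') ^ (-(1/4:ℝ)) := by
      rcases min_choice y y₁ with hmin | hmin
      · rw [hm, hmin]
        exact le_add_of_nonneg_right (Real.rpow_nonneg huy₁ _)
      · rw [hm, hmin]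
        exact le_add_of_nonneg_left (Real.rpow_nonneg huy _)
    -- combine
    have hmain : (ThetaInt ρ' δ m) ^ 2 / (lam ^ 2 * y₁ ^ 2) * rWeight ρ' δ y
        ≤ K₂ * (1 - m / ρ') ^ (-(1/4:ℝ)) := by
      have e1 : (ThetaInt ρ' δ m) ^ 2 / (lam ^ 2 * y₁ ^ 2) * rWeight ρ' δ y
          ≤ (ThetaInt ρ' δ m) ^ 2 / (lam ^ 2 * y₁ ^ 2)
            * (Real.exp (2 * ρ' * ρ') * (1 - m / ρ') ^ (2 * δ)) :=
        mul_le_mul_of_nonneg_left hrw_le (by positivity)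
      have e2 : (ThetaInt ρ' δ m) ^ 2 / (lam ^ 2 * y₁ ^ 2)
            * (Real.exp (2 * ρ' * ρ') * (1 - m / ρ') ^ (2 * δ))
          = ((ThetaInt ρ' δ m) ^ 2 * (1 - m / ρ') ^ (2 * δ)) * Real.exp (2 * ρ' * ρ')
            * (1 / (lam ^ 2 * y₁ ^ 2)) := by ring
      have e3 : ((ThetaInt ρ' δ m) ^ 2 * (1 - m / ρ') ^ (2 * δ)) * Real.exp (2 * ρ' * ρ')
            * (1 / (lam ^ 2 * y₁ ^ 2))
          ≤ (c ^ 2 * (1 - m / ρ') ^ (-(1/4:ℝ))) * Real.exp (2 * ρ' * ρ')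
            * (4 / (lam ^ 2 * ρ' ^ 2)) := by
        apply mul_le_mul
        · exact mul_le_mul_of_nonneg_right key (Real.exp_pos _).le
        · exact hy₁sq
        · positivity
        · positivity
      have e4 : (c ^ 2 * (1 - m / ρ') ^ (-(1/4:ℝ))) * Real.exp (2 * ρ' * ρ')
            * (4 / (lam ^ 2 * ρ' ^ 2)) = K₂ * (1 - m / ρ') ^ (-(1/4:ℝ)) := by
        rw [hK₂]; ring
      calc (ThetaInt ρ' δ m) ^ 2 / (lam ^ 2 * y₁ ^ 2) * rWeight ρ' δ y
          ≤ _ := e1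
        _ = _ := e2
        _ ≤ _ := e3
        _ = _ := e4
    calc (ThetaInt ρ' δ m) ^ 2 / (lam ^ 2 * y₁ ^ 2) * rWeight ρ' δ y
        ≤ K₂ * (1 - m / ρ') ^ (-(1/4:ℝ)) := hmain
      _ ≤ K₂ * ((1 - y / ρ') ^ (-(1/4:ℝ)) + (1 - y₁ / ρ') ^ (-(1/4:ℝ))) :=
          mul_le_mul_of_nonneg_left hmin_le hK₂0
      _ ≤ g p := by
          have hgp : g p = K₁ + K₂ * ((1 - y / ρ') ^ (-(1/4:ℝ)) + (1 - y₁ / ρ') ^ (-(1/4:ℝ))) := by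
            rw [hp_eq]
          rw [hgp]
          linarith
end

section
/- Let λ', λ, μ be real with λ' ≠ 0, let σ ∈ ℂ, and let φ : ℂ → ℂ be an entire function satisfying the eigenvalue equation (λ'z² + iλz)·φ''(z) + (iλz² + μz)·φ'(z) = σ·φ(z) for all z ∈ ℂ. Then there exist constants C > 0 and M > 0 such that |φ(z)| ≤ C·e^{M|z|} for all z ∈ ℂ; in particular ∫_ℂ |φ(z)|² e^{−|z|²} dx dy < ∞, i.e. φ belongs to the Bargmann space. -/
open MeasureTheory

set_option maxHeartbeats 1600000

/-- Every entire solution of the eigenvalue equation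
`(λ'z² + iλz)φ''(z) + (iλz² + μz)φ'(z) = σφ(z)` (with `λ' ≠ 0`) has at most
exponential growth, and in particular belongs to the Bargmann space. -/
theorem heun_entire_solution_mem_bargmann (lam' lam μ : ℝ) (hlam' : lam' ≠ 0)
    (σ : ℂ) (φ : ℂ → ℂ) (hφ : Differentiable ℂ φ)
    (heq : ∀ z : ℂ,
      ((lam' : ℂ) * z ^ 2 + Complex.I * (lam : ℂ) * z) * iteratedDeriv 2 φ z
        + (Complex.I * (lam : ℂ) * z ^ 2 + (μ : ℂ) * z) * deriv φ z = σ * φ z) :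
    (∃ C > 0, ∃ M > 0, ∀ z : ℂ, ‖φ z‖ ≤ C * Real.exp (M * ‖z‖)) ∧
      Integrable (fun z : ℂ => ‖φ z‖ ^ 2 * Real.exp (-‖z‖ ^ 2)) := by
  obtain ⟨ψ, hψdef⟩ : ∃ g : ℂ → ℂ, g = deriv φ := ⟨_, rfl⟩
  have hψ : Differentiable ℂ ψ := by
    rw [hψdef]
    have h2 : ContDiff ℂ (1+1) φ := hφ.contDiff
    exact ((contDiff_succ_iff_deriv.mp h2).2.2).differentiable one_ne_zero
  have hit : iteratedDeriv 2 φ = deriv ψ := by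
    rw [hψdef, show (2:ℕ) = 1 + 1 from rfl, iteratedDeriv_succ, iteratedDeriv_one]
  obtain ⟨a, ha_def⟩ : ∃ x : ℝ, x = |lam'| := ⟨_, rfl⟩
  have ha : 0 < a := ha_def ▸ abs_pos.mpr hlam'
  obtain ⟨R, hR_def⟩ : ∃ x : ℝ, x = max 1 (2 * |lam| / a + 1) := ⟨_, rfl⟩
  have hR1 : (1:ℝ) ≤ R := hR_def ▸ le_max_left _ _
  have hR0 : (0:ℝ) < R := lt_of_lt_of_le one_pos hR1
  have haR : 2 * |lam| ≤ a * R := by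
    have hRlam : 2 * |lam| / a + 1 ≤ R := hR_def ▸ le_max_right _ _
    have h1 : a * (2 * |lam| / a) = 2 * |lam| := by field_simp
    nlinarith [mul_le_mul_of_nonneg_left hRlam ha.le]
  obtain ⟨K, hK_def⟩ : ∃ x : ℝ, x = 2 * (‖σ‖ + |lam| + |μ|) / a + 1 := ⟨_, rfl⟩
  have hK1 : (1:ℝ) ≤ K := by
    rw [hK_def]
    have : 0 ≤ 2 * (‖σ‖ + |lam| + |μ|) / a := by positivity
    linarith
  have hKpos : (0:ℝ) < K := lt_of_lt_of_le one_pos hK1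
  -- key pointwise estimate on the second derivative away from the singular points
  have key : ∀ w : ℂ, R ≤ ‖w‖ → ‖deriv ψ w‖ ≤ K * (‖φ w‖ + ‖ψ w‖) := by
    intro w hw
    have hw1 : (1:ℝ) ≤ ‖w‖ := le_trans hR1 hw
    have hw2 : (1:ℝ) ≤ ‖w‖^2 := by nlinarith
    have hww : ‖w‖ ≤ ‖w‖^2 := by nlinarith
    have hwa : 2 * |lam| ≤ a * ‖w‖ := le_trans haR (by nlinarith)
    have hden : a * ‖w‖^2 / 2 ≤ ‖(lam' : ℂ) * w ^ 2 + Complex.I * (lam : ℂ) * w‖ := by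
      have h1 : ‖(lam' : ℂ) * w ^ 2‖ = a * ‖w‖^2 := by
        simp [norm_mul, norm_pow, Complex.norm_real, Real.norm_eq_abs, ha_def]
      have h2 : ‖Complex.I * (lam : ℂ) * w‖ = |lam| * ‖w‖ := by
        simp [norm_mul, Complex.norm_real, Real.norm_eq_abs]
      have h3 : ‖(lam' : ℂ) * w ^ 2‖ ≤
          ‖(lam' : ℂ) * w ^ 2 + Complex.I * (lam : ℂ) * w‖ + ‖Complex.I * (lam : ℂ) * w‖ := by
        calc ‖(lam' : ℂ) * w ^ 2‖
            = ‖((lam' : ℂ) * w ^ 2 + Complex.I * (lam : ℂ) * w) - Complex.I * (lam : ℂ) * w‖ := by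
              ring_nf
          _ ≤ _ := norm_sub_le _ _
      rw [h1, h2] at h3
      nlinarith [norm_nonneg w]
    have hnum : ‖Complex.I * (lam : ℂ) * w ^ 2 + (μ : ℂ) * w‖ ≤ (|lam| + |μ|) * ‖w‖^2 := by
      calc ‖Complex.I * (lam : ℂ) * w ^ 2 + (μ : ℂ) * w‖
          ≤ ‖Complex.I * (lam : ℂ) * w ^ 2‖ + ‖(μ : ℂ) * w‖ := norm_add_le _ _
        _ = |lam| * ‖w‖^2 + |μ| * ‖w‖ := by
            simp [norm_mul, norm_pow, Complex.norm_real, Real.norm_eq_abs]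
        _ ≤ (|lam| + |μ|) * ‖w‖^2 := by nlinarith [abs_nonneg μ]
    have heqw := heq w
    rw [hit, ← hψdef] at heqw
    have heq2 : ((lam' : ℂ) * w ^ 2 + Complex.I * (lam : ℂ) * w) * deriv ψ w
        = σ * φ w - (Complex.I * (lam : ℂ) * w ^ 2 + (μ : ℂ) * w) * ψ w := by
      rw [← heqw]; ring
    have hnorm : ‖(lam' : ℂ) * w ^ 2 + Complex.I * (lam : ℂ) * w‖ * ‖deriv ψ w‖
        ≤ ‖σ‖ * ‖φ w‖ + (|lam| + |μ|) * ‖w‖^2 * ‖ψ w‖ := by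
      rw [← norm_mul, heq2]
      calc ‖σ * φ w - (Complex.I * (lam : ℂ) * w ^ 2 + (μ : ℂ) * w) * ψ w‖
          ≤ ‖σ * φ w‖ + ‖(Complex.I * (lam : ℂ) * w ^ 2 + (μ : ℂ) * w) * ψ w‖ := norm_sub_le _ _
        _ ≤ ‖σ‖ * ‖φ w‖ + (|lam| + |μ|) * ‖w‖^2 * ‖ψ w‖ := by
            rw [norm_mul, norm_mul]
            have := mul_le_mul_of_nonneg_right hnum (norm_nonneg (ψ w))
            linarith
    have hfinal : a * ‖w‖^2 / 2 * ‖deriv ψ w‖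
        ≤ (‖σ‖ + |lam| + |μ|) * (‖φ w‖ + ‖ψ w‖) * ‖w‖^2 := by
      have h5 : a * ‖w‖^2 / 2 * ‖deriv ψ w‖
          ≤ ‖(lam' : ℂ) * w ^ 2 + Complex.I * (lam : ℂ) * w‖ * ‖deriv ψ w‖ :=
        mul_le_mul_of_nonneg_right hden (norm_nonneg _)
      have h7 : ‖σ‖ * ‖φ w‖ ≤ ‖σ‖ * ‖φ w‖ * ‖w‖^2 :=
        le_mul_of_one_le_right (by positivity) hw2
      nlinarith [norm_nonneg (φ w), norm_nonneg (ψ w), norm_nonneg σ, abs_nonneg lam, abs_nonneg μ,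
        mul_nonneg (mul_nonneg (abs_nonneg lam) (norm_nonneg (φ w))) (sq_nonneg ‖w‖),
        mul_nonneg (mul_nonneg (abs_nonneg μ) (norm_nonneg (φ w))) (sq_nonneg ‖w‖),
        mul_nonneg (mul_nonneg (norm_nonneg σ) (norm_nonneg (ψ w))) (sq_nonneg ‖w‖)]
    have hw2pos : (0:ℝ) < ‖w‖^2 := by nlinarith
    have h8 : a / 2 * ‖deriv ψ w‖ ≤ (‖σ‖ + |lam| + |μ|) * (‖φ w‖ + ‖ψ w‖) := by
      have h9 : a / 2 * ‖deriv ψ w‖ * ‖w‖^2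
          ≤ (‖σ‖ + |lam| + |μ|) * (‖φ w‖ + ‖ψ w‖) * ‖w‖^2 := by
        calc a / 2 * ‖deriv ψ w‖ * ‖w‖^2 = a * ‖w‖^2 / 2 * ‖deriv ψ w‖ := by ring
          _ ≤ _ := hfinal
      exact le_of_mul_le_mul_right h9 hw2pos
    rw [hK_def]
    have hS : 0 ≤ ‖φ w‖ + ‖ψ w‖ := by positivity
    have h10 : ‖deriv ψ w‖ ≤ 2 * (‖σ‖ + |lam| + |μ|) / a * (‖φ w‖ + ‖ψ w‖) := by
      rw [div_mul_eq_mul_div, le_div_iff₀ ha]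
      linarith only [h8]
    linarith only [h10, hS]
  -- bound of (φ, ψ) on the closed ball of radius R
  obtain ⟨C0, hC0⟩ := (isCompact_closedBall (0:ℂ) R).exists_bound_of_continuousOn
    (f := fun w => (φ w, ψ w)) ((hφ.continuous.prodMk hψ.continuous).continuousOn)
  have hC0nn : 0 ≤ C0 :=
    le_trans (norm_nonneg _) (hC0 0 (Metric.mem_closedBall_self hR0.le))
  -- the main exponential bound, via Grönwall's inequality along rays
  have main : ∀ z : ℂ, ‖(φ z, ψ z)‖ ≤ (C0 + 1) * Real.exp (2 * K * ‖z‖) := by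
    intro z
    have hexp1 : (1:ℝ) ≤ Real.exp (2 * K * ‖z‖) := by
      rw [show (1:ℝ) = Real.exp 0 from (Real.exp_zero).symm]
      exact Real.exp_le_exp.mpr (by positivity)
    by_cases hz : ‖z‖ ≤ R
    · have h1 : ‖(φ z, ψ z)‖ ≤ C0 := hC0 z (by simpa [Metric.mem_closedBall,
        Complex.dist_eq, sub_zero] using hz)
      nlinarith
    · push_neg at hz
      obtain ⟨u, hu_def⟩ : ∃ x : ℂ, x = (‖z‖)⁻¹ • z := ⟨_, rfl⟩
      have hz0 : ‖z‖ ≠ 0 := (lt_trans hR0 hz).ne'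
      have hu : ‖u‖ = 1 := by
        rw [hu_def, norm_smul, norm_inv, norm_norm, inv_mul_cancel₀ hz0]
      have huz : ‖z‖ • u = z := by
        rw [hu_def, smul_smul, mul_inv_cancel₀ hz0, one_smul]
      -- derivative of the pair along the ray
      have hF' : ∀ t : ℝ, HasDerivAt (fun s : ℝ => (φ (s • u), ψ (s • u)))
          (u • ψ (t • u), u • deriv ψ (t • u)) t := by
        intro t
        have hline : HasDerivAt (fun s : ℝ => s • u) u t := by
          simpa using (hasDerivAt_id t).smul_const u
        have h1 : HasDerivAt (fun s : ℝ => φ (s • u)) (u • ψ (t • u)) t := by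
          have := HasDerivAt.scomp (x := t) (hφ (t • u)).hasDerivAt hline
          simpa [hψdef, Function.comp_def] using this
        have h2 : HasDerivAt (fun s : ℝ => ψ (s • u)) (u • deriv ψ (t • u)) t := by
          have := HasDerivAt.scomp (x := t) (hψ (t • u)).hasDerivAt hline
          simpa [Function.comp_def] using this
        exact h1.prodMk h2
      have hnormt : ∀ t : ℝ, 0 ≤ t → ‖t • u‖ = t := by
        intro t ht
        rw [norm_smul, hu, mul_one, Real.norm_eq_abs, abs_of_nonneg ht]
      have hcont : ContinuousOn (fun s : ℝ => (φ (s • u), ψ (s • u))) (Set.Icc R ‖z‖) :=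
        Continuous.continuousOn
          ((hφ.continuous.comp (continuous_id.smul continuous_const)).prodMk
            (hψ.continuous.comp (continuous_id.smul continuous_const)))
      have hstart : ‖(φ ((R:ℝ) • u), ψ ((R:ℝ) • u))‖ ≤ C0 :=
        hC0 _ (mem_closedBall_zero_iff.mpr (le_of_eq (hnormt R hR0.le)))
      have hbound : ∀ t ∈ Set.Ico R ‖z‖,
          ‖(u • ψ (t • u), u • deriv ψ (t • u))‖
            ≤ 2 * K * ‖(φ (t • u), ψ (t • u))‖ + 0 := by
        intro t ht
        have htR : R ≤ t := ht.1
        have ht0 : 0 ≤ t := le_trans hR0.le htR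
        have hwt : R ≤ ‖t • u‖ := by rw [hnormt t ht0]; exact htR
        have hk := key (t • u) hwt
        have husmul : ∀ x : ℂ, ‖u • x‖ = ‖x‖ := by
          intro x; rw [norm_smul, hu, one_mul]
        rw [Prod.norm_def, Prod.norm_def]
        simp only [husmul]
        have hle1 : ‖ψ (t • u)‖ ≤ max ‖φ (t • u)‖ ‖ψ (t • u)‖ := le_max_right _ _
        have hle2 : ‖φ (t • u)‖ ≤ max ‖φ (t • u)‖ ‖ψ (t • u)‖ := le_max_left _ _
        have hmax0 : 0 ≤ max ‖φ (t • u)‖ ‖ψ (t • u)‖ :=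
          le_trans (norm_nonneg _) hle2
        have hK0' : (0:ℝ) ≤ K := hKpos.le
        have hKmax : max ‖φ (t • u)‖ ‖ψ (t • u)‖ ≤ K * max ‖φ (t • u)‖ ‖ψ (t • u)‖ :=
          le_mul_of_one_le_left hmax0 hK1
        have e1 : K * (‖φ (t • u)‖ + ‖ψ (t • u)‖)
            ≤ K * (max ‖φ (t • u)‖ ‖ψ (t • u)‖ + max ‖φ (t • u)‖ ‖ψ (t • u)‖) :=
          mul_le_mul_of_nonneg_left (add_le_add hle2 hle1) hK0'
        have e2 : 0 ≤ K * max ‖φ (t • u)‖ ‖ψ (t • u)‖ := mul_nonneg hK0' hmax0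
        apply max_le
        · linarith only [hle1, hKmax, e2]
        · linarith only [hk, e1]
      have grb := norm_le_gronwallBound_of_norm_deriv_right_le
        (f := fun s : ℝ => (φ (s • u), ψ (s • u)))
        (f' := fun t => (u • ψ (t • u), u • deriv ψ (t • u)))
        (δ := C0) (K := 2 * K) (ε := 0) (a := R) (b := ‖z‖)
        hcont (fun t _ => (hF' t).hasDerivWithinAt) hstart hbound
      have hfin := grb ‖z‖ ⟨hz.le, le_rfl⟩
      have hfin' : ‖(φ z, ψ z)‖ ≤ C0 * Real.exp (2 * K * (‖z‖ - R)) := by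
        simpa only [huz, gronwallBound_ε0] using hfin
      calc ‖(φ z, ψ z)‖ ≤ C0 * Real.exp (2 * K * (‖z‖ - R)) := hfin'
        _ ≤ (C0 + 1) * Real.exp (2 * K * ‖z‖) := by
            apply mul_le_mul (by linarith only [hC0nn])
              (Real.exp_le_exp.mpr (by linarith only [mul_nonneg hKpos.le hR0.le]))
              (by positivity) (by linarith only [hC0nn])
  -- conclude the exponential bound for φ itself
  have hφbound : ∀ z : ℂ, ‖φ z‖ ≤ (C0 + 1) * Real.exp (2 * K * ‖z‖) := by
    intro z
    exact le_trans (norm_fst_le (φ z, ψ z)) (main z)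
  have hCpos : (0:ℝ) < C0 + 1 := by linarith
  have hMpos : (0:ℝ) < 2 * K := by linarith
  refine ⟨⟨C0 + 1, hCpos, 2 * K, hMpos, hφbound⟩, ?_⟩
  -- integrability
  obtain ⟨C, hC_def⟩ : ∃ x : ℝ, x = C0 + 1 := ⟨_, rfl⟩
  obtain ⟨M, hM_def⟩ : ∃ x : ℝ, x = 2 * K := ⟨_, rfl⟩
  have hCpos' : 0 < C := hC_def ▸ hCpos
  have hMpos' : 0 < M := hM_def ▸ hMpos
  have hb : ∀ z : ℂ, ‖φ z‖ ≤ C * Real.exp (M * ‖z‖) := by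
    intro z; rw [hC_def, hM_def]; exact hφbound z
  have hgauss : Integrable (fun v : ℂ => Real.exp (-(1/2 : ℝ) * ‖v‖^2)) := by
    have h := GaussianFourier.integrable_cexp_neg_mul_sq_norm_add (V := ℂ)
      (b := (1/2 : ℂ)) (by norm_num) 0 0
    have h2 := h.norm
    convert h2 using 2 with v
    simp only [Complex.norm_exp]
    congr 1
    simp [← Complex.ofReal_pow]
  have hg : Integrable (fun z : ℂ =>
      (C^2 * Real.exp (2 * M^2)) * Real.exp (-(1/2 : ℝ) * ‖z‖^2)) := hgauss.const_mul _
  apply hg.mono'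
  · apply Continuous.aestronglyMeasurable
    exact (hφ.continuous.norm.pow 2).mul
      (Real.continuous_exp.comp ((continuous_norm.pow 2).neg))
  · filter_upwards with z
    have hr0 : (0:ℝ) ≤ ‖z‖ := norm_nonneg z
    have h1 : ‖φ z‖^2 ≤ (C * Real.exp (M * ‖z‖))^2 :=
      pow_le_pow_left₀ (norm_nonneg _) (hb z) 2
    have h2 : ‖φ z‖^2 * Real.exp (-‖z‖^2)
        ≤ (C * Real.exp (M * ‖z‖))^2 * Real.exp (-‖z‖^2) :=
      mul_le_mul_of_nonneg_right h1 (Real.exp_nonneg _)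
    have h3 : (C * Real.exp (M * ‖z‖))^2 * Real.exp (-‖z‖^2)
        = C^2 * Real.exp (2 * (M * ‖z‖) + (-‖z‖^2)) := by
      have hx : Real.exp (M * ‖z‖)^2 * Real.exp (-‖z‖^2)
          = Real.exp (2 * (M * ‖z‖) + (-‖z‖^2)) := by
        rw [pow_two, ← Real.exp_add, ← Real.exp_add]
        congr 1
        ring
      rw [mul_pow, mul_assoc, hx]
    have h4 : Real.exp (2 * (M * ‖z‖) + (-‖z‖^2))
        ≤ Real.exp (2 * M^2 + (-(1/2 : ℝ) * ‖z‖^2)) := by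
      apply Real.exp_le_exp.mpr
      nlinarith [sq_nonneg (‖z‖ - 2 * M)]
    have h5 : ‖‖φ z‖^2 * Real.exp (-‖z‖^2)‖ = ‖φ z‖^2 * Real.exp (-‖z‖^2) := by
      rw [Real.norm_eq_abs, abs_of_nonneg (by positivity)]
    rw [h5]
    calc ‖φ z‖^2 * Real.exp (-‖z‖^2)
        ≤ C^2 * Real.exp (2 * (M * ‖z‖) + (-‖z‖^2)) := by rw [← h3]; exact h2
      _ ≤ C^2 * Real.exp (2 * M^2 + (-(1/2 : ℝ) * ‖z‖^2)) :=
          mul_le_mul_of_nonneg_left h4 (by positivity)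
      _ = (C^2 * Real.exp (2 * M^2)) * Real.exp (-(1/2 : ℝ) * ‖z‖^2) := by
          rw [Real.exp_add]; ring
end

section
/- Fix λ > 0, λ' > 0, μ > 0, set ρ' = λ/λ', δ = ρ'(μ/λ + ρ') − 1 and assume ρ'(μ/λ + ρ') ≥ 1. Let σ ∈ ℂ and let u : ℝ → ℂ be twice continuously differentiable on an open interval containing [0, ρ'], with u(0) = 0, u not identically zero on [0, ρ'], and satisfying (λ'y² − λy)u''(y) + (λy² + μy)u'(y) = σ·u(y) for all y ∈ [0, ρ']. Then σ is real. -/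
open MeasureTheory Set

/-- The restriction of the regularized Gribov operator to the negative imaginary
axis: `(Mu)(y) = (λ'y² − λy)u''(y) + (λy² + μy)u'(y)`. -/
noncomputable def Mop (lam' lam μ : ℝ) (u : ℝ → ℂ) (y : ℝ) : ℂ :=
  ((lam' * y ^ 2 - lam * y : ℝ) : ℂ) * deriv (deriv u) y
    + ((lam * y ^ 2 + μ * y : ℝ) : ℂ) * deriv u y

/-- If `ρ'(μ/λ + ρ') ≥ 1` then every eigenvalue `σ` of the regularized Gribov
operator restricted to `[0, ρ']` (with eigenfunction vanishing at `0` but not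
identically zero) is real. -/
theorem regularized_gribov_eigenvalues_real (lam lam' μ : ℝ)
    (hlam : 0 < lam) (hlam' : 0 < lam') (hμ : 0 < μ)
    (ρ' : ℝ) (hρ' : ρ' = lam / lam') (hge : 1 ≤ ρ' * (μ / lam + ρ'))
    (σ : ℂ) (u : ℝ → ℂ) (a b : ℝ) (ha : a < 0) (hb : ρ' < b)
    (hu : ContDiffOn ℝ 2 u (Set.Ioo a b))
    (hu0 : u 0 = 0) (hne : ∃ y ∈ Set.Icc (0 : ℝ) ρ', u y ≠ 0)
    (heq : ∀ y ∈ Set.Icc (0 : ℝ) ρ', Mop lam' lam μ u y = σ * u y) :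
    σ.im = 0 := by
  have hρ'pos : 0 < ρ' := by rw [hρ']; positivity
  set δ : ℝ := ρ' * (μ / lam + ρ') - 1 with hδdef
  have hδ : 0 ≤ δ := by simp only [hδdef]; linarith
  have h1δ : 1 + δ = ρ' * (μ / lam + ρ') := by ring
  have h1δpos : (0:ℝ) < 1 + δ := by linarith
  have hlρ : lam' * ρ' = lam := by rw [hρ']; field_simp
  set q : ℝ → ℝ := fun y => Real.exp (ρ' * y) * (ρ' - y) ^ (δ:ℝ) with hqdef
  set p : ℝ → ℝ := fun y => -lam' * (Real.exp (ρ' * y) * (ρ' - y) ^ ((1:ℝ) + δ)) with hpdef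
  set D : ℝ → ℝ := fun y => -lam' * (Real.exp (ρ' * y) * ρ' * (ρ' - y) ^ ((1:ℝ) + δ)
      + Real.exp (ρ' * y) * (-(((1:ℝ) + δ) * (ρ' - y) ^ (δ:ℝ)))) with hDdef
  -- derivative of p
  have hpD : ∀ y : ℝ, HasDerivAt p (D y) y := by
    intro y
    have hE : HasDerivAt (fun z => Real.exp (ρ' * z)) (Real.exp (ρ' * y) * ρ') y := by
      simpa using ((hasDerivAt_id y).const_mul ρ').exp
    have hin : HasDerivAt (fun z : ℝ => ρ' - z) (-1) y := by
      simpa using (hasDerivAt_id' y).const_sub ρ'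
    have hG : HasDerivAt (fun z : ℝ => (ρ' - z) ^ ((1:ℝ) + δ))
        ((((1:ℝ) + δ) * (ρ' - y) ^ ((1:ℝ) + δ - 1)) * (-1)) y :=
      (Real.hasDerivAt_rpow_const (Or.inr (by linarith))).comp y hin
    have hexp : (1:ℝ) + δ - 1 = δ := by ring
    rw [hexp] at hG
    have := (hE.mul hG).const_mul (-lam')
    refine this.congr_deriv ?_
    simp only [hDdef]
    ring
  -- splitting the rpow
  have hsplit : ∀ y : ℝ, y ≤ ρ' → (ρ' - y) ^ ((1:ℝ) + δ) = (ρ' - y) * (ρ' - y) ^ (δ:ℝ) := by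
    intro y hy
    rcases eq_or_lt_of_le hy with h | h
    · rw [← h]; simp [Real.zero_rpow h1δpos.ne']
    · have hpos : 0 < ρ' - y := by linarith
      rw [Real.rpow_add hpos 1 δ, Real.rpow_one]
  -- identities for D and p on [0, ρ']
  have hq_pos : ∀ y : ℝ, y < ρ' → 0 < q y := by
    intro y hy
    exact mul_pos (Real.exp_pos _) (Real.rpow_pos_of_pos (by linarith) _)
  have hq_nonneg : ∀ y : ℝ, y ≤ ρ' → 0 ≤ q y := by
    intro y hy
    exact mul_nonneg (Real.exp_pos _).le (Real.rpow_nonneg (by linarith) _)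
  have hDq : ∀ y : ℝ, y ≤ ρ' → D y = q y * (lam * y + μ) := by
    intro y hy
    have hml : lam * (μ / lam) = μ := by field_simp
    simp only [hDdef, hqdef, hsplit y hy]
    linear_combination (lam' * Real.exp (ρ' * y) * ((ρ' - y) ^ (δ:ℝ))) * h1δ
      + (Real.exp (ρ' * y) * ((ρ' - y) ^ (δ:ℝ)) * (y + μ / lam)) * hlρ
      + (Real.exp (ρ' * y) * ((ρ' - y) ^ (δ:ℝ))) * hml
  have hxp : ∀ y : ℝ, y ≤ ρ' → y * p y = (lam' * y ^ 2 - lam * y) * q y := by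
    intro y hy
    simp only [hpdef, hqdef, hsplit y hy]
    linear_combination (-(y * Real.exp (ρ' * y) * ((ρ' - y) ^ (δ:ℝ)))) * hlρ
  -- facts about u
  have hsub : Icc 0 ρ' ⊆ Ioo a b := fun y hy => ⟨lt_of_lt_of_le ha hy.1, lt_of_le_of_lt hy.2 hb⟩
  have hopen : IsOpen (Ioo a b) := isOpen_Ioo
  have hu1 : ∀ x ∈ Ioo a b, HasDerivAt u (deriv u x) x := fun x hx =>
    ((hu.differentiableOn (by norm_num) x hx).differentiableAt
      (hopen.mem_nhds hx)).hasDerivAt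
  have hud : ContDiffOn ℝ 1 (deriv u) (Ioo a b) :=
    hu.deriv_of_isOpen hopen (by norm_num)
  have hu2 : ∀ x ∈ Ioo a b, HasDerivAt (deriv u) (deriv (deriv u) x) x := fun x hx =>
    ((hud.differentiableOn (by norm_num) x hx).differentiableAt
      (hopen.mem_nhds hx)).hasDerivAt
  have hcont_u : ContinuousOn u (Ioo a b) := hu.continuousOn
  have hcont_u' : ContinuousOn (deriv u) (Ioo a b) := hud.continuousOn
  -- the function F and its derivative
  set F : ℝ → ℂ := fun y => (p y : ℂ) * deriv u y * (starRingEnd ℂ) (u y) with hFdef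
  set F' : ℝ → ℂ := fun x => ((D x : ℂ) * deriv u x + (p x : ℂ) * deriv (deriv u) x) *
      (starRingEnd ℂ) (u x) + (p x : ℂ) * deriv u x * (starRingEnd ℂ) (deriv u x) with hF'def
  have hFD : ∀ x ∈ Ioo a b, HasDerivAt F (F' x) x := by
    intro x hx
    have hpC : HasDerivAt (fun y => ((p y : ℝ) : ℂ)) ((D x : ℝ) : ℂ) x :=
      (hpD x).ofReal_comp
    have hconj : HasDerivAt (fun y => (starRingEnd ℂ) (u y)) ((starRingEnd ℂ) (deriv u x)) x := by
      have := ((Complex.conjCLE : ℂ ≃L[ℝ] ℂ) : ℂ →L[ℝ] ℂ).hasFDerivAt.comp_hasDerivAt x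
        (hu1 x hx)
      exact this
    exact (hpC.mul (hu2 x hx)).mul hconj
  set W : ℝ → ℝ := fun y => (F y).im with hWdef
  have hWD : ∀ x ∈ Ioo a b, HasDerivAt W ((F' x).im) x := by
    intro x hx
    have := (Complex.imCLM.hasFDerivAt (x := F x)).comp_hasDerivAt x (hFD x hx)
    exact this
  -- the functions h and g
  set h : ℝ → ℝ := fun y => q y * Complex.normSq (u y) / y with hhdef
  set g : ℝ → ℝ := fun y => σ.im * h y with hgdef
  -- key identity
  have hkey : ∀ x ∈ Ioo 0 ρ', (F' x).im = g x := by
    intro x hx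
    have hx0 : x ≠ 0 := ne_of_gt hx.1
    have hmem : x ∈ Icc 0 ρ' := ⟨hx.1.le, hx.2.le⟩
    have hMop := heq x hmem
    rw [Mop] at hMop
    have h2 := congrArg Complex.im hMop
    have h1 := congrArg Complex.re hMop
    simp only [Complex.add_im, Complex.add_re, Complex.mul_im, Complex.mul_re,
      Complex.ofReal_re, Complex.ofReal_im, zero_mul, mul_zero, sub_zero, zero_add,
      add_zero] at h1 h2
    have hD := hDq x hx.2.le
    have hq := hxp x hx.2.le
    have key2 : x * (F' x).im = σ.im * (q x * Complex.normSq (u x)) := by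
      simp only [hF'def, Complex.add_im, Complex.add_re, Complex.mul_im, Complex.mul_re,
        Complex.conj_re, Complex.conj_im, Complex.ofReal_re, Complex.ofReal_im,
        Complex.normSq_apply]
      linear_combination (x * ((deriv u x).im * (u x).re - (deriv u x).re * (u x).im)) * hD
        + ((deriv (deriv u) x).im * (u x).re - (deriv (deriv u) x).re * (u x).im) * hq
        + (q x * (u x).re) * h2 + (-(q x * (u x).im)) * h1
    have : (F' x).im = σ.im * (q x * Complex.normSq (u x)) / x := by
      rw [← key2]; field_simp
    rw [this]
    simp only [hgdef, hhdef]
    ring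
  -- boundedness of deriv u on Icc
  obtain ⟨K, hK⟩ := (isCompact_Icc : IsCompact (Icc (0:ℝ) ρ')).exists_bound_of_continuousOn
    (hcont_u'.mono hsub)
  have hubound : ∀ y ∈ Icc (0:ℝ) ρ', ‖u y‖ ≤ K * y := by
    intro y hy
    have := Convex.norm_image_sub_le_of_norm_hasDerivWithin_le
      (f := u) (f' := deriv u) (s := Icc (0:ℝ) ρ') (C := K)
      (fun z hz => (hu1 z (hsub hz)).hasDerivWithinAt) hK (convex_Icc _ _)
      ⟨le_refl 0, hρ'pos.le⟩ hy
    simpa [hu0, Real.norm_of_nonneg hy.1] using this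
  -- bound for q
  set Q : ℝ := Real.exp (ρ' * ρ') * ρ' ^ (δ:ℝ) with hQdef
  have hqQ : ∀ y ∈ Icc (0:ℝ) ρ', q y ≤ Q := by
    intro y hy
    have h1 : Real.exp (ρ' * y) ≤ Real.exp (ρ' * ρ') :=
      Real.exp_le_exp.2 (mul_le_mul_of_nonneg_left hy.2 hρ'pos.le)
    have h2 : (ρ' - y) ^ (δ:ℝ) ≤ ρ' ^ (δ:ℝ) :=
      Real.rpow_le_rpow (by linarith [hy.2]) (by linarith [hy.1]) hδ
    exact mul_le_mul h1 h2 (Real.rpow_nonneg (by linarith [hy.2]) _) (Real.exp_pos _).le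
  -- q is continuous
  have hqcont : Continuous q := by
    apply Continuous.mul
    · exact Real.continuous_exp.comp (continuous_const.mul continuous_id)
    · rw [continuous_iff_continuousAt]
      intro y
      exact (Real.continuousAt_rpow_const _ _ (Or.inr hδ)).comp
        ((continuous_const.sub continuous_id).continuousAt)
  -- h is integrable on Ioo 0 ρ'
  have hmeas : AEStronglyMeasurable h (volume.restrict (Ioo (0:ℝ) ρ')) := by
    have hcont : ContinuousOn h (Ioo (0:ℝ) ρ') := by
      apply ContinuousOn.div
      · exact hqcont.continuousOn.mul (Complex.continuous_normSq.comp_continuousOn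
          (hcont_u.mono (Set.Ioo_subset_Icc_self.trans hsub)))
      · exact continuous_id.continuousOn
      · intro y hy; exact ne_of_gt hy.1
    exact hcont.aestronglyMeasurable measurableSet_Ioo
  have hKQ : ∀ y ∈ Ioo (0:ℝ) ρ', ‖h y‖ ≤ Q * K ^ 2 * ρ' := by
    intro y hy
    have hymem : y ∈ Icc (0:ℝ) ρ' := ⟨hy.1.le, hy.2.le⟩
    have hy0 : 0 < y := hy.1
    have hK0 : 0 ≤ K := le_trans (norm_nonneg _) (hK y hymem)
    have hQ0 : 0 ≤ Q := mul_nonneg (Real.exp_pos _).le (Real.rpow_nonneg hρ'pos.le _)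
    have hns : Complex.normSq (u y) ≤ (K * y) ^ 2 := by
      rw [← Complex.sq_norm]
      have h1 : ‖u y‖ ≤ K * y := hubound y hymem
      nlinarith [norm_nonneg (u y)]
    have hh0 : 0 ≤ h y := by
      simp only [hhdef]
      exact div_nonneg (mul_nonneg (hq_nonneg y hy.2.le) (Complex.normSq_nonneg _)) hy0.le
    rw [Real.norm_of_nonneg hh0]
    simp only [hhdef]
    rw [div_le_iff₀ hy0]
    calc q y * Complex.normSq (u y) ≤ Q * (K * y) ^ 2 :=
          mul_le_mul (hqQ y hymem) hns (Complex.normSq_nonneg _) hQ0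
      _ = (Q * K ^ 2 * y) * y := by ring
      _ ≤ (Q * K ^ 2 * ρ') * y := by
          nlinarith [mul_nonneg (mul_nonneg hQ0 (sq_nonneg K)) (mul_nonneg (sub_nonneg.2 hy.2.le) hy0.le)]
  have hinth : IntegrableOn h (Ioo (0:ℝ) ρ') volume := by
    haveI : Fact (volume (Ioo (0:ℝ) ρ') < ⊤) := ⟨measure_Ioo_lt_top⟩
    refine ⟨hmeas, HasFiniteIntegral.of_bounded (C := Q * K ^ 2 * ρ') ?_⟩
    exact (ae_restrict_iff' measurableSet_Ioo).2 (ae_of_all _ hKQ)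
  -- FTC
  have hWc : ContinuousOn W (Icc 0 ρ') := fun x hx =>
    ((hWD x (hsub hx)).continuousAt).continuousWithinAt
  have hintg : IntervalIntegrable g volume 0 ρ' := by
    rw [intervalIntegrable_iff_integrableOn_Ioc_of_le hρ'pos.le,
      integrableOn_Ioc_iff_integrableOn_Ioo]
    exact hinth.const_mul σ.im
  have hFTC : ∫ y in (0:ℝ)..ρ', g y = W ρ' - W 0 := by
    apply intervalIntegral.integral_eq_sub_of_hasDeriv_right_of_le hρ'pos.le hWc _ hintg
    intro x hx
    have hxab : x ∈ Ioo a b := hsub ⟨hx.1.le, hx.2.le⟩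
    have := hWD x hxab
    rw [hkey x hx] at this
    exact this.hasDerivWithinAt
  have hW0 : W 0 = 0 := by simp [hWdef, hFdef, hu0]
  have hWρ : W ρ' = 0 := by
    have hp0 : p ρ' = 0 := by
      simp [hpdef, Real.zero_rpow h1δpos.ne']
    simp [hWdef, hFdef, hp0]
  have hI : σ.im * ∫ y in (0:ℝ)..ρ', h y = 0 := by
    rw [← intervalIntegral.integral_const_mul]
    rw [hW0, hWρ] at hFTC
    simpa [hgdef] using hFTC
  -- conclusion
  by_contra him
  have hI0 : ∫ y in (0:ℝ)..ρ', h y = 0 := by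
    rcases mul_eq_zero.1 hI with h' | h'
    · exact absurd h' him
    · exact h'
  rw [intervalIntegral.integral_of_le hρ'pos.le, MeasureTheory.integral_Ioc_eq_integral_Ioo] at hI0
  have hnn : 0 ≤ᵐ[volume.restrict (Ioo (0:ℝ) ρ')] h := by
    refine (ae_restrict_iff' measurableSet_Ioo).2 (ae_of_all _ fun y hy => ?_)
    simp only [hhdef]
    exact div_nonneg (mul_nonneg (hq_nonneg y hy.2.le) (Complex.normSq_nonneg _)) hy.1.le
  have hzero : h =ᵐ[volume.restrict (Ioo (0:ℝ) ρ')] 0 :=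
    (integral_eq_zero_iff_of_nonneg_ae hnn hinth).1 hI0
  obtain ⟨y₀, hy₀mem, hy₀⟩ := hne
  have hy₀pos : 0 < y₀ := by
    rcases eq_or_lt_of_le hy₀mem.1 with h' | h'
    · exact absurd (h' ▸ hu0) hy₀
    · exact h'
  have hcAt : ContinuousAt u y₀ := hcont_u.continuousAt (hopen.mem_nhds (hsub hy₀mem))
  have hev := hcAt.eventually_ne hy₀
  rw [Metric.eventually_nhds_iff] at hev
  obtain ⟨ε, hε, hball⟩ := hev
  set c : ℝ := max (y₀ - ε/2) (y₀/2) with hcdef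
  have hc : c < y₀ := max_lt (by linarith) (by linarith)
  have hJ1 : Ioo c y₀ ⊆ Ioo (0:ℝ) ρ' := by
    intro z hz
    constructor
    · have : y₀/2 ≤ c := le_max_right _ _
      linarith [hz.1]
    · exact lt_of_lt_of_le hz.2 hy₀mem.2
  have hJ2 : ∀ z ∈ Ioo c y₀, h z ≠ 0 := by
    intro z hz
    have hz' := hJ1 hz
    have huz : u z ≠ 0 := by
      apply hball
      rw [Real.dist_eq, abs_of_nonpos (by linarith [hz.2])]
      have : y₀ - ε/2 ≤ c := le_max_left _ _
      linarith [hz.1]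
    have : 0 < h z := by
      simp only [hhdef]
      exact div_pos (mul_pos (hq_pos z (lt_of_lt_of_le hz.2 hy₀mem.2))
        (Complex.normSq_pos.2 huz)) hz'.1
    exact ne_of_gt this
  have hnull : volume.restrict (Ioo (0:ℝ) ρ') {y | h y ≠ 0} = 0 := by
    have := hzero
    rw [Filter.EventuallyEq, ae_iff] at this
    simpa using this
  have hres : volume.restrict (Ioo (0:ℝ) ρ') (Ioo c y₀) = 0 :=
    measure_mono_null (fun z hz => hJ2 z hz) hnull
  rw [Measure.restrict_apply measurableSet_Ioo,
    Set.inter_eq_self_of_subset_left hJ1, Real.volume_Ioo] at hres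
  have := ENNReal.ofReal_eq_zero.1 hres
  linarith
end

section
/- Fix λ > 0, λ' > 0, μ > 0, set ρ' = λ/λ', δ = ρ'(μ/λ + ρ') − 1 and assume ρ'(μ/λ + ρ') ≥ 1. Let σ ∈ ℂ and let u, v : ℝ → ℂ be twice continuously differentiable on an open interval containing [0, ρ'], with u(0) = v(0) = 0, and suppose both satisfy the same eigenvalue equation (λ'y² − λy)w''(y) + (λy² + μy)w'(y) = σ·w(y) for all y ∈ [0, ρ']. Then the Wronskian vanishes identically: v(y)·u'(y) − u(y)·v'(y) = 0 for all y ∈ [0, ρ']. In particular any two such eigenfunctions are linearly dependent, so each eigenvalue is geometrically simple. -/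
/-- If `ρ'(μ/λ + ρ') ≥ 1` and `u, v` are two eigenfunctions of the regularized
Gribov operator on `[0, ρ']` for the same eigenvalue `σ`, both vanishing at `0`,
then their Wronskian `v·u' − u·v'` vanishes identically on `[0, ρ']`; in
particular each eigenvalue is geometrically simple. -/
theorem regularized_gribov_eigenvalues_simple (lam lam' μ : ℝ)
    (hlam : 0 < lam) (hlam' : 0 < lam') (hμ : 0 < μ)
    (ρ' : ℝ) (hρ' : ρ' = lam / lam') (hge : 1 ≤ ρ' * (μ / lam + ρ'))
    (σ : ℂ) (u v : ℝ → ℂ) (a b : ℝ) (ha : a < 0) (hb : ρ' < b)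
    (hu : ContDiffOn ℝ 2 u (Set.Ioo a b)) (hv : ContDiffOn ℝ 2 v (Set.Ioo a b))
    (hu0 : u 0 = 0) (hv0 : v 0 = 0)
    (hequ : ∀ y ∈ Set.Icc (0 : ℝ) ρ', Mop lam' lam μ u y = σ * u y)
    (heqv : ∀ y ∈ Set.Icc (0 : ℝ) ρ', Mop lam' lam μ v y = σ * v y) :
    ∀ y ∈ Set.Icc (0 : ℝ) ρ', v y * deriv u y - u y * deriv v y = 0 := by
  have hρ'pos : 0 < ρ' := by rw [hρ']; positivity
  have hlamρ' : lam' * ρ' = lam := by rw [hρ']; field_simp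
  have hsub : Set.Icc (0:ℝ) ρ' ⊆ Set.Ioo a b := fun y hy =>
    ⟨lt_of_lt_of_le ha hy.1, lt_of_le_of_lt hy.2 hb⟩
  -- derivatives exist
  have hud : ∀ y ∈ Set.Ioo a b, HasDerivAt u (deriv u y) y := fun y hy =>
    ((hu.differentiableOn two_ne_zero).differentiableAt (isOpen_Ioo.mem_nhds hy)).hasDerivAt
  have hvd : ∀ y ∈ Set.Ioo a b, HasDerivAt v (deriv v y) y := fun y hy =>
    ((hv.differentiableOn two_ne_zero).differentiableAt (isOpen_Ioo.mem_nhds hy)).hasDerivAt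
  have hu1 : ContDiffOn ℝ 1 (deriv u) (Set.Ioo a b) :=
    hu.deriv_of_isOpen isOpen_Ioo (by norm_num)
  have hv1 : ContDiffOn ℝ 1 (deriv v) (Set.Ioo a b) :=
    hv.deriv_of_isOpen isOpen_Ioo (by norm_num)
  have hudd : ∀ y ∈ Set.Ioo a b, HasDerivAt (deriv u) (deriv (deriv u) y) y := fun y hy =>
    ((hu1.differentiableOn one_ne_zero).differentiableAt (isOpen_Ioo.mem_nhds hy)).hasDerivAt
  have hvdd : ∀ y ∈ Set.Ioo a b, HasDerivAt (deriv v) (deriv (deriv v) y) y := fun y hy =>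
    ((hv1.differentiableOn one_ne_zero).differentiableAt (isOpen_Ioo.mem_nhds hy)).hasDerivAt
  set W : ℝ → ℂ := fun y => v y * deriv u y - u y * deriv v y with hWdef
  set DW : ℝ → ℂ := fun y => v y * deriv (deriv u) y - u y * deriv (deriv v) y with hDWdef
  have hW : ∀ y ∈ Set.Ioo a b, HasDerivAt W (DW y) y := by
    intro y hy
    have h := (((hvd y hy).mul (hudd y hy)).sub ((hud y hy).mul (hvdd y hy)))
    refine h.congr_deriv ?_
    ring
  -- key pointwise identity on [0, ρ')
  set c : ℝ := (lam * ρ' + μ) / lam' with hcdef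
  set g : ℝ → ℝ := fun y => -ρ' + c / (ρ' - y) with hgdef
  have hkey : ∀ y ∈ Set.Ico (0:ℝ) ρ', DW y = (g y : ℂ) * W y := by
    intro y hy
    rcases eq_or_lt_of_le hy.1 with h0 | h0
    · simp [hWdef, hDWdef, ← h0, hu0, hv0]
    · have hyI : y ∈ Set.Icc (0:ℝ) ρ' := ⟨hy.1, le_of_lt hy.2⟩
      have equ := hequ y hyI
      have eqv := heqv y hyI
      rw [Mop] at equ eqv
      have hC2 : (lam' * y ^ 2 - lam * y : ℝ) ≠ 0 := by
        have : lam' * y ^ 2 - lam * y = lam' * y * (y - ρ') := by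
          rw [← hlamρ']; ring
        rw [this]
        have : y - ρ' < 0 := by linarith [hy.2]
        exact ne_of_lt (mul_neg_of_pos_of_neg (by positivity) this)
      have hC2C : ((lam' * y ^ 2 - lam * y : ℝ) : ℂ) ≠ 0 := by
        exact_mod_cast (Complex.ofReal_ne_zero.mpr hC2)
      -- C2 * DW y + C1 * W y = 0
      have hcomb : ((lam' * y ^ 2 - lam * y : ℝ) : ℂ) * DW y
          + ((lam * y ^ 2 + μ * y : ℝ) : ℂ) * W y = 0 := by
        have h1 := congrArg (fun z => v y * z) equ
        have h2 := congrArg (fun z => u y * z) eqv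
        simp only [hDWdef, hWdef]
        linear_combination h1 - h2
      have hρy : ρ' - y ≠ 0 := ne_of_gt (by linarith [hy.2])
      have hgc : (lam' * y ^ 2 - lam * y) * g y = -(lam * y ^ 2 + μ * y) := by
        rw [hgdef, hcdef, ← hlamρ']
        field_simp
        ring
      refine mul_left_cancel₀ hC2C ?_
      have : ((lam' * y ^ 2 - lam * y : ℝ) : ℂ) * ((g y : ℂ) * W y)
          = ((-(lam * y ^ 2 + μ * y) : ℝ) : ℂ) * W y := by
        rw [← hgc]
        push_cast
        ring
      rw [this]
      push_cast at hcomb ⊢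
      linear_combination hcomb
  -- integrating factor
  set E : ℝ → ℂ := fun y => Complex.exp (((ρ' * y + c * Real.log (ρ' - y) : ℝ) : ℂ)) with hEdef
  have hE : ∀ y ∈ Set.Ico (0:ℝ) ρ', HasDerivAt E (((-(g y) : ℝ) : ℂ) * E y) y := by
    intro y hy
    have hρy : (0:ℝ) < ρ' - y := by simp only [Set.mem_Ico] at hy; linarith [hy.2]
    have ha1 : HasDerivAt (fun t : ℝ => ρ' * t) ρ' y := by
      simpa using (hasDerivAt_id y).const_mul ρ'
    have ha2 : HasDerivAt (fun t : ℝ => ρ' - t) (-1) y := by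
      simpa using (hasDerivAt_id y).const_sub ρ'
    have ha3 : HasDerivAt (fun t : ℝ => Real.log (ρ' - t)) (-1 / (ρ' - y)) y :=
      ha2.log (ne_of_gt hρy)
    have h1 : HasDerivAt (fun t : ℝ => ρ' * t + c * Real.log (ρ' - t))
        (ρ' - c / (ρ' - y)) y := by
      have := ha1.add (ha3.const_mul c)
      refine this.congr_deriv ?_
      ring
    have h2 := (h1.ofReal_comp).cexp
    convert h2 using 1
    have hng : (-(g y) : ℝ) = ρ' - c / (ρ' - y) := by rw [hgdef]; ring
    rw [hng]
    exact mul_comm _ _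
  have hEne : ∀ y, E y ≠ 0 := fun y => Complex.exp_ne_zero _
  set F : ℝ → ℂ := fun y => W y * E y with hFdef
  have hF : ∀ y ∈ Set.Ico (0:ℝ) ρ', HasDerivAt F 0 y := by
    intro y hy
    have hyab : y ∈ Set.Ioo a b := hsub ⟨hy.1, le_of_lt hy.2⟩
    have h := (hW y hyab).mul (hE y hy)
    rw [hkey y hy] at h
    refine h.congr_deriv ?_
    push_cast
    ring
  have hW0 : ∀ y ∈ Set.Ico (0:ℝ) ρ', W y = 0 := by
    intro y hy
    have hcont : ContinuousOn F (Set.Icc 0 y) := fun x hx =>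
      ((hF x ⟨hx.1, lt_of_le_of_lt hx.2 hy.2⟩).continuousAt).continuousWithinAt
    have hder : ∀ x ∈ Set.Ico 0 y, HasDerivWithinAt F 0 (Set.Ici x) x := fun x hx =>
      (hF x ⟨hx.1, lt_trans hx.2 hy.2⟩).hasDerivWithinAt
    have heq := constant_of_has_deriv_right_zero hcont hder y (Set.right_mem_Icc.mpr hy.1)
    have hF0 : F 0 = 0 := by simp [hFdef, hWdef, hu0, hv0]
    rw [hF0] at heq
    exact (mul_eq_zero.mp heq).resolve_right (hEne y)
  -- conclusion
  intro y hy
  rcases lt_or_eq_of_le hy.2 with hlt | hyeq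
  · exact hW0 y ⟨hy.1, hlt⟩
  · have equ := hequ y hy
    have eqv := heqv y hy
    rw [Mop] at equ eqv
    have hz : (lam' * y ^ 2 - lam * y : ℝ) = 0 := by rw [hyeq, ← hlamρ']; ring
    rw [hz] at equ eqv
    simp only [Complex.ofReal_zero, zero_mul, zero_add] at equ eqv
    have hk : (lam * y ^ 2 + μ * y : ℝ) ≠ 0 := by rw [hyeq]; positivity
    have hkC : ((lam * y ^ 2 + μ * y : ℝ) : ℂ) ≠ 0 := Complex.ofReal_ne_zero.mpr hk
    refine mul_left_cancel₀ hkC ?_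
    rw [mul_zero]
    linear_combination v y * equ - u y * eqv
end

section
/- Let μ, λ ∈ ℝ. There exists a constant C > 0 (depending only on μ and λ) such that for every finitely supported sequence a : ℕ → ℂ, ‖H_{μ,λ}a‖ ≤ C · ‖Ĝa‖^{1/2} · ‖a‖^{1/2}, i.e. the Gribov operator H_{μ,λ} is 1/2-subordinate to Ĝ = A*³A³ + I. -/
/-- The diagonal matrix of `Ĝ = A*³A³ + I`: `(Ĝa)ₙ = (n(n−1)(n−2)+1)·aₙ`. -/
noncomputable def gHat (a : ℕ → ℂ) : ℕ → ℂ := fun n =>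
  ((n * (n - 1) * (n - 2) + 1 : ℕ) : ℂ) * a n

private lemma key_nat (m : ℕ) : m^2*(m+1) + m^2 + m^3 ≤ 50 * (m*(m-1)*(m-2)+1) := by
  match m with
  | 0 => norm_num
  | 1 => norm_num
  | 2 => norm_num
  | (k+3) =>
    have h1 : k+3-1 = k+2 := by omega
    have h2 : k+3-2 = k+1 := by omega
    rw [h1, h2]; nlinarith [sq_nonneg k]

private lemma key_real (m : ℕ) :
    (m:ℝ)^2*((m:ℝ)+1) + (m:ℝ)^2 + (m:ℝ)^3 ≤ 50 * ((m*(m-1)*(m-2)+1 : ℕ) : ℝ) := by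
  have h : ((m^2*(m+1) + m^2 + m^3 : ℕ) : ℝ) ≤ ((50 * (m*(m-1)*(m-2)+1) : ℕ) : ℝ) :=
    Nat.cast_le.mpr (key_nat m)
  calc (m:ℝ)^2*((m:ℝ)+1) + (m:ℝ)^2 + (m:ℝ)^3
      = ((m^2*(m+1) + m^2 + m^3 : ℕ) : ℝ) := by push_cast; ring
    _ ≤ ((50 * (m*(m-1)*(m-2)+1) : ℕ) : ℝ) := h
    _ = 50 * ((m*(m-1)*(m-2)+1 : ℕ) : ℝ) := by rw [Nat.cast_mul]; norm_num

private lemma shift_sum (f : ℕ → ℝ) (hf0 : f 0 = 0) (M : ℕ) :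
    ∑ n ∈ Finset.range (M+1), f n = ∑ m ∈ Finset.range M, f (m+1) := by
  rw [Finset.sum_range_succ', hf0, add_zero]

set_option maxHeartbeats 1000000 in
/-- `H_{μ,λ}` is 1/2-subordinate to `Ĝ = A*³A³ + I`:
there is `C > 0` with `‖H_{μ,λ}a‖ ≤ C·‖Ĝa‖^{1/2}·‖a‖^{1/2}` for all finitely
supported `a`. -/
theorem gribovH_half_subordinate_gHat (μ lam : ℝ) :
    ∃ C > 0, ∀ a : ℕ → ℂ, (Function.support a).Finite →
      l2norm (gribovH μ lam a) ≤
        C * Real.sqrt (l2norm (gHat a)) * Real.sqrt (l2norm a) := by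
  set L : ℝ := lam^2 + μ^2 + 1 with hL
  have hLpos : 0 < L := by positivity
  refine ⟨Real.sqrt (150 * L), Real.sqrt_pos.mpr (by positivity), ?_⟩
  intro a hfin
  obtain ⟨N, hN⟩ := Finset.exists_nat_subset_range hfin.toFinset
  have ha : ∀ m, N ≤ m → a m = 0 := by
    intro m hm
    by_contra h
    have hmem : m ∈ hfin.toFinset := by simpa [Function.mem_support] using h
    have := Finset.mem_range.mp (hN hmem)
    omega
  set A : ℕ → ℝ := fun n => ‖a n‖^2 with hA
  have hAnn : ∀ n, 0 ≤ A n := fun n => sq_nonneg _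
  set g : ℕ → ℝ := fun n => ((n*(n-1)*(n-2)+1 : ℕ) : ℝ) with hg
  have hgnn : ∀ n, 0 ≤ g n := fun n => Nat.cast_nonneg _
  set s : Finset ℕ := Finset.range (N+2) with hs
  -- tsum computations
  have hH0 : ∀ n ∉ s, ‖gribovH μ lam a n‖^2 = 0 := by
    intro n hn
    rw [hs, Finset.mem_range] at hn
    push_neg at hn
    have h1 : a (n-1) = 0 := ha _ (by omega)
    have h2 : a n = 0 := ha _ (by omega)
    have h3 : a (n+1) = 0 := ha _ (by omega)
    simp [gribovH, h1, h2, h3]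
  have hHsum : (∑' n, ‖gribovH μ lam a n‖^2) = ∑ n ∈ s, ‖gribovH μ lam a n‖^2 :=
    tsum_eq_sum hH0
  have hGterm : ∀ n, ‖gHat a n‖^2 = g n ^ 2 * A n := by
    intro n
    simp only [gHat, hA, hg, norm_mul, Complex.norm_natCast]
    ring
  have hGsum : (∑' n, ‖gHat a n‖^2) = ∑ n ∈ s, g n ^ 2 * A n := by
    rw [tsum_congr hGterm]
    refine tsum_eq_sum ?_
    intro n hn
    rw [hs, Finset.mem_range] at hn
    have hz : a n = 0 := ha _ (by omega)
    simp [hA, hz]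
  have hasum : (∑' n, ‖a n‖^2) = ∑ n ∈ s, A n := by
    refine tsum_eq_sum ?_
    intro n hn
    rw [hs, Finset.mem_range] at hn
    have hz : a n = 0 := ha _ (by omega)
    simp [hA, hz]
  -- pointwise bound
  have hpt : ∀ n ∈ s, ‖gribovH μ lam a n‖^2 ≤
      3 * (lam^2 * ((n-1 : ℕ):ℝ)^2 * (n:ℝ) * A (n-1) + μ^2 * (n:ℝ)^2 * A n
        + lam^2 * (n:ℝ)^2 * ((n:ℝ)+1) * A (n+1)) := by
    intro n _
    rcases eq_or_ne n 0 with rfl | hn0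
    · have h0 : ‖gribovH μ lam a 0‖^2 = 0 := by simp [gribovH]
      rw [h0]
      positivity
    · rw [gribovH, if_neg hn0]
      have htri := norm_add₃_le (a := Complex.I * (lam : ℂ) * ((n - 1 : ℕ) : ℂ) * (Real.sqrt n : ℂ) * a (n - 1))
        (b := (μ : ℂ) * (n : ℂ) * a n)
        (c := Complex.I * (lam : ℂ) * (n : ℂ) * (Real.sqrt (n + 1) : ℂ) * a (n + 1))
      set x := ‖Complex.I * (lam : ℂ) * ((n - 1 : ℕ) : ℂ) * (Real.sqrt n : ℂ) * a (n - 1)‖ with hx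
      set y := ‖(μ : ℂ) * (n : ℂ) * a n‖ with hy
      set z := ‖Complex.I * (lam : ℂ) * (n : ℂ) * (Real.sqrt (n + 1) : ℂ) * a (n + 1)‖ with hz
      have hx2 : x^2 = lam^2 * ((n-1 : ℕ):ℝ)^2 * (n:ℝ) * A (n-1) := by
        rw [hx]
        simp only [norm_mul, Complex.norm_I, Complex.norm_real, Complex.norm_natCast, one_mul,
          Real.norm_eq_abs]
        rw [mul_pow, mul_pow, mul_pow, sq_abs, sq_abs, Real.sq_sqrt (Nat.cast_nonneg n)]
      have hy2 : y^2 = μ^2 * (n:ℝ)^2 * A n := by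
        rw [hy]
        simp only [norm_mul, Complex.norm_real, Complex.norm_natCast, Real.norm_eq_abs]
        rw [mul_pow, mul_pow, sq_abs]
      have hz2 : z^2 = lam^2 * (n:ℝ)^2 * ((n:ℝ)+1) * A (n+1) := by
        rw [hz]
        simp only [norm_mul, Complex.norm_I, Complex.norm_real, Complex.norm_natCast, one_mul,
          Real.norm_eq_abs]
        rw [mul_pow, mul_pow, mul_pow, sq_abs, sq_abs,
          Real.sq_sqrt (by positivity : (0:ℝ) ≤ (n:ℝ)+1)]
      have hsq : ‖Complex.I * (lam : ℂ) * ((n - 1 : ℕ) : ℂ) * (Real.sqrt n : ℂ) * a (n - 1)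
            + (μ : ℂ) * (n : ℂ) * a n
            + Complex.I * (lam : ℂ) * (n : ℂ) * (Real.sqrt (n + 1) : ℂ) * a (n + 1)‖^2
          ≤ (x+y+z)^2 := pow_le_pow_left₀ (norm_nonneg _) htri 2
      have h3 : (x+y+z)^2 ≤ 3*(x^2+y^2+z^2) := by
        nlinarith [sq_nonneg (x-y), sq_nonneg (y-z), sq_nonneg (x-z)]
      calc ‖Complex.I * (lam : ℂ) * ((n - 1 : ℕ) : ℂ) * (Real.sqrt n : ℂ) * a (n - 1)
            + (μ : ℂ) * (n : ℂ) * a n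
            + Complex.I * (lam : ℂ) * (n : ℂ) * (Real.sqrt (n + 1) : ℂ) * a (n + 1)‖^2
          ≤ (x+y+z)^2 := hsq
        _ ≤ 3*(x^2+y^2+z^2) := h3
        _ = 3 * (lam^2 * ((n-1 : ℕ):ℝ)^2 * (n:ℝ) * A (n-1) + μ^2 * (n:ℝ)^2 * A n
            + lam^2 * (n:ℝ)^2 * ((n:ℝ)+1) * A (n+1)) := by rw [hx2, hy2, hz2]
  -- sum of pointwise bounds
  have sum1 : ∑ n ∈ s, ‖gribovH μ lam a n‖^2 ≤
      3 * ((∑ n ∈ s, lam^2 * ((n-1:ℕ):ℝ)^2 * (n:ℝ) * A (n-1))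
        + (∑ n ∈ s, μ^2 * (n:ℝ)^2 * A n)
        + (∑ n ∈ s, lam^2 * (n:ℝ)^2 * ((n:ℝ)+1) * A (n+1))) := by
    rw [← Finset.sum_add_distrib, ← Finset.sum_add_distrib, Finset.mul_sum]
    exact Finset.sum_le_sum hpt
  -- reindexing the first sum
  have hS1 : (∑ n ∈ s, lam^2 * ((n-1:ℕ):ℝ)^2 * (n:ℝ) * A (n-1))
      ≤ ∑ n ∈ s, lam^2 * (n:ℝ)^2 * ((n:ℝ)+1) * A n := by
    rw [hs, shift_sum (fun n => lam^2 * ((n-1:ℕ):ℝ)^2 * (n:ℝ) * A (n-1)) (by norm_num) (N+1)]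
    refine le_trans (le_of_eq (Finset.sum_congr rfl fun m _ => ?_))
      (Finset.sum_le_sum_of_subset_of_nonneg
        (show Finset.range (N+1) ⊆ Finset.range (N+2) from Finset.range_subset_range.mpr (by omega))
        (fun n _ _ => by positivity))
    simp only [Nat.add_sub_cancel]
    push_cast
    ring
  -- reindexing the third sum
  have hS3 : (∑ n ∈ s, lam^2 * (n:ℝ)^2 * ((n:ℝ)+1) * A (n+1))
      ≤ ∑ n ∈ s, lam^2 * (n:ℝ)^3 * A n := by
    have step1 : (∑ n ∈ s, lam^2 * (n:ℝ)^2 * ((n:ℝ)+1) * A (n+1))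
        ≤ ∑ n ∈ s, lam^2 * ((n+1:ℕ):ℝ)^3 * A (n+1) := by
      refine Finset.sum_le_sum fun n _ => ?_
      have h1 : 0 ≤ lam^2 * A (n+1) * (((n:ℝ)+1)*(2*(n:ℝ)+1)) :=
        mul_nonneg (mul_nonneg (sq_nonneg _) (hAnn _)) (by positivity)
      have hid : lam^2*(((n:ℕ)+1:ℕ):ℝ)^3*A (n+1) = lam^2*(n:ℝ)^2*((n:ℝ)+1)*A (n+1)
          + lam^2*A (n+1)*(((n:ℝ)+1)*(2*(n:ℝ)+1)) := by push_cast; ring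
      linarith
    have step2 : (∑ n ∈ s, lam^2 * ((n+1:ℕ):ℝ)^3 * A (n+1))
        = ∑ n ∈ s, lam^2 * (n:ℝ)^3 * A n := by
      have hsh := shift_sum (fun m => lam^2 * (m:ℝ)^3 * A m) (by norm_num) (N+2)
      rw [hs, ← hsh, Finset.sum_range_succ]
      have hz : a (N+2) = 0 := ha _ (by omega)
      have hz2 : A (N+2) = 0 := by rw [hA]; simp [hz]
      rw [hz2, mul_zero, add_zero]
    rw [← step2]
    exact step1
  -- per-term weight estimate
  have h4 : (∑ n ∈ s, 3 * (lam^2*(n:ℝ)^2*((n:ℝ)+1) + μ^2*(n:ℝ)^2 + lam^2*(n:ℝ)^3) * A n)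
      ≤ ∑ n ∈ s, 150 * L * (g n * A n) := by
    refine Finset.sum_le_sum fun n _ => ?_
    have hkey : (n:ℝ)^2*((n:ℝ)+1) + (n:ℝ)^2 + (n:ℝ)^3 ≤ 50 * g n := by
      rw [hg]; exact key_real n
    have hl2 : lam^2 ≤ L := by rw [hL]; nlinarith [sq_nonneg μ]
    have hm2 : μ^2 ≤ L := by rw [hL]; nlinarith [sq_nonneg lam]
    have hX : (0:ℝ) ≤ (n:ℝ)^2*((n:ℝ)+1) := by positivity
    have hY : (0:ℝ) ≤ (n:ℝ)^2 := by positivity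
    have hZ : (0:ℝ) ≤ (n:ℝ)^3 := by positivity
    have hW : lam^2*(n:ℝ)^2*((n:ℝ)+1) + μ^2*(n:ℝ)^2 + lam^2*(n:ℝ)^3
        ≤ L * ((n:ℝ)^2*((n:ℝ)+1) + (n:ℝ)^2 + (n:ℝ)^3) := by nlinarith
    have hW2 : L * ((n:ℝ)^2*((n:ℝ)+1) + (n:ℝ)^2 + (n:ℝ)^3) ≤ L * (50 * g n) :=
      mul_le_mul_of_nonneg_left hkey (le_of_lt hLpos)
    have h5 : lam^2*(n:ℝ)^2*((n:ℝ)+1) + μ^2*(n:ℝ)^2 + lam^2*(n:ℝ)^3 ≤ 50 * L * g n := by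
      calc _ ≤ L * (50 * g n) := le_trans hW hW2
        _ = 50 * L * g n := by ring
    calc 3 * (lam^2*(n:ℝ)^2*((n:ℝ)+1) + μ^2*(n:ℝ)^2 + lam^2*(n:ℝ)^3) * A n
        ≤ 3 * (50 * L * g n) * A n := by
          nlinarith [mul_le_mul_of_nonneg_right h5 (hAnn n)]
      _ = 150 * L * (g n * A n) := by ring
  have h3eq : (∑ n ∈ s, 3 * (lam^2*(n:ℝ)^2*((n:ℝ)+1) + μ^2*(n:ℝ)^2 + lam^2*(n:ℝ)^3) * A n)
      = 3 * ((∑ n ∈ s, lam^2 * (n:ℝ)^2 * ((n:ℝ)+1) * A n)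
        + (∑ n ∈ s, μ^2 * (n:ℝ)^2 * A n)
        + (∑ n ∈ s, lam^2 * (n:ℝ)^3 * A n)) := by
    rw [← Finset.sum_add_distrib, ← Finset.sum_add_distrib, Finset.mul_sum]
    exact Finset.sum_congr rfl fun n _ => by ring
  have hWsum : ∑ n ∈ s, ‖gribovH μ lam a n‖^2 ≤ 150 * L * (∑ n ∈ s, g n * A n) := by
    calc ∑ n ∈ s, ‖gribovH μ lam a n‖^2
        ≤ 3 * ((∑ n ∈ s, lam^2 * ((n-1:ℕ):ℝ)^2 * (n:ℝ) * A (n-1))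
          + (∑ n ∈ s, μ^2 * (n:ℝ)^2 * A n)
          + (∑ n ∈ s, lam^2 * (n:ℝ)^2 * ((n:ℝ)+1) * A (n+1))) := sum1
      _ ≤ 3 * ((∑ n ∈ s, lam^2 * (n:ℝ)^2 * ((n:ℝ)+1) * A n)
          + (∑ n ∈ s, μ^2 * (n:ℝ)^2 * A n)
          + (∑ n ∈ s, lam^2 * (n:ℝ)^3 * A n)) := by linarith [hS1, hS3]
      _ = ∑ n ∈ s, 3 * (lam^2*(n:ℝ)^2*((n:ℝ)+1) + μ^2*(n:ℝ)^2 + lam^2*(n:ℝ)^3) * A n := h3eq.symm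
      _ ≤ ∑ n ∈ s, 150 * L * (g n * A n) := h4
      _ = 150 * L * (∑ n ∈ s, g n * A n) := by rw [← Finset.mul_sum]
  -- Cauchy–Schwarz
  have hCS : (∑ n ∈ s, g n * A n)
      ≤ Real.sqrt (∑ n ∈ s, g n^2 * A n) * Real.sqrt (∑ n ∈ s, A n) := by
    have h := Finset.sum_mul_sq_le_sq_mul_sq s (fun n => g n * ‖a n‖) (fun n => ‖a n‖)
    have e1 : ∑ n ∈ s, (g n * ‖a n‖) * ‖a n‖ = ∑ n ∈ s, g n * A n :=
      Finset.sum_congr rfl fun n _ => by rw [hA]; ring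
    have e2 : ∑ n ∈ s, (g n * ‖a n‖)^2 = ∑ n ∈ s, g n^2 * A n :=
      Finset.sum_congr rfl fun n _ => by rw [hA]; ring
    have e3 : ∑ n ∈ s, ‖a n‖^2 = ∑ n ∈ s, A n := rfl
    rw [e1, e2, e3] at h
    have hnn : 0 ≤ ∑ n ∈ s, g n * A n :=
      Finset.sum_nonneg fun n _ => mul_nonneg (hgnn n) (hAnn n)
    calc (∑ n ∈ s, g n * A n) = Real.sqrt ((∑ n ∈ s, g n * A n)^2) := (Real.sqrt_sq hnn).symm
      _ ≤ Real.sqrt ((∑ n ∈ s, g n^2 * A n) * (∑ n ∈ s, A n)) := Real.sqrt_le_sqrt h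
      _ = _ := Real.sqrt_mul (Finset.sum_nonneg fun n _ => mul_nonneg (sq_nonneg _) (hAnn n)) _
  have hmain : ∑ n ∈ s, ‖gribovH μ lam a n‖^2
      ≤ 150 * L * (Real.sqrt (∑ n ∈ s, g n^2 * A n) * Real.sqrt (∑ n ∈ s, A n)) :=
    le_trans hWsum (mul_le_mul_of_nonneg_left hCS (by positivity))
  -- conclude
  have hl2G : l2norm (gHat a) = Real.sqrt (∑ n ∈ s, g n^2 * A n) := by
    rw [l2norm, hGsum]
  have hl2a : l2norm a = Real.sqrt (∑ n ∈ s, A n) := by rw [l2norm, hasum]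
  rw [l2norm, hHsum, hl2G, hl2a]
  calc Real.sqrt (∑ n ∈ s, ‖gribovH μ lam a n‖^2)
      ≤ Real.sqrt (150 * L * (Real.sqrt (∑ n ∈ s, g n^2 * A n) * Real.sqrt (∑ n ∈ s, A n))) :=
        Real.sqrt_le_sqrt hmain
    _ = Real.sqrt (150 * L)
        * Real.sqrt (Real.sqrt (∑ n ∈ s, g n^2 * A n) * Real.sqrt (∑ n ∈ s, A n)) :=
        Real.sqrt_mul (by positivity) _
    _ = Real.sqrt (150 * L) * (Real.sqrt (Real.sqrt (∑ n ∈ s, g n^2 * A n))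
        * Real.sqrt (Real.sqrt (∑ n ∈ s, A n))) := by
        rw [Real.sqrt_mul (Real.sqrt_nonneg _)]
    _ = Real.sqrt (150 * L) * Real.sqrt (Real.sqrt (∑ n ∈ s, g n^2 * A n))
        * Real.sqrt (Real.sqrt (∑ n ∈ s, A n)) := by ring
end

section
/- Let μ, λ ∈ ℝ and let β be a real number with 3 ≤ β < 4. For every ε > 0 there exists a constant C_ε > 0 such that for every finitely supported sequence a : ℕ → ℂ, ‖H_{μ,λ}a‖ ≤ ε · ‖Ĝa‖^{2/β} · ‖a‖^{1 − 2/β} + C_ε · ‖a‖. -/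
set_option maxHeartbeats 1000000


private lemma key_cube (m : ℕ) : (m + 1) ^ 3 ≤ 27 * (m * (m - 1) * (m - 2) + 1) := by
  match m with
  | 0 => decide
  | 1 => decide
  | 2 => decide
  | (k + 3) =>
    have h1 : (k + 3) - 1 = k + 2 := rfl
    have h2 : (k + 3) - 2 = k + 1 := rfl
    rw [h1, h2]
    nlinarith [k.zero_le, sq_nonneg k]

/-- For `3 ≤ β < 4` and every `ε > 0` there is `C_ε > 0` such that
`‖H_{μ,λ}a‖ ≤ ε·‖Ĝa‖^{2/β}·‖a‖^{1−2/β} + C_ε·‖a‖` for all finitely supported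
sequences `a`. -/
theorem gribovH_subordinate_gHat_order (μ lam β : ℝ) (hβ1 : 3 ≤ β) (hβ2 : β < 4)
    (ε : ℝ) (hε : 0 < ε) :
    ∃ C > 0, ∀ a : ℕ → ℂ, (Function.support a).Finite →
      l2norm (gribovH μ lam a) ≤
        ε * (l2norm (gHat a)) ^ ((2 : ℝ) / β) * (l2norm a) ^ (1 - (2 : ℝ) / β)
          + C * l2norm a := by
  have hβ0 : (0 : ℝ) < β := by linarith
  set p : ℝ := 2 / β with hp
  have hp_half : (1 : ℝ) / 2 < p := by
    rw [hp, div_lt_div_iff₀ (by norm_num) hβ0]; linarith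
  have hp_lt1 : p < 1 := by
    rw [hp, div_lt_one hβ0]; linarith
  set θ : ℝ := p - 1 / 2 with hθ
  have hθpos : 0 < θ := by rw [hθ]; linarith
  set c : ℝ := |μ| + |lam| + 1 with hc
  have hcpos : (0 : ℝ) < c := by positivity
  have hc1 : (1 : ℝ) ≤ c := by
    have := abs_nonneg μ; have := abs_nonneg lam; rw [hc]; linarith
  set K : ℝ := 18 * c with hK
  have hKpos : 0 < K := by positivity
  set T : ℝ := (K / ε) ^ θ⁻¹ with hT
  have hT0 : 0 ≤ T := Real.rpow_nonneg (by positivity) _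
  have hTθ : T ^ θ = K / ε := Real.rpow_inv_rpow (by positivity) hθpos.ne'
  refine ⟨K * Real.sqrt T + 1, by positivity, ?_⟩
  intro a hfin
  -- choose a bound for the support
  obtain ⟨N, hNb⟩ := hfin.bddAbove
  have hN : ∀ n, N + 1 ≤ n → a n = 0 := by
    intro n hn
    by_contra h
    have := hNb (Function.mem_support.2 h)
    omega
  -- the weight
  set w : ℕ → ℝ := fun m => ((m * (m - 1) * (m - 2) + 1 : ℕ) : ℝ) with hw
  have hw0 : ∀ m, 1 ≤ w m := by
    intro m
    simp only [hw]
    exact_mod_cast Nat.one_le_iff_ne_zero.2 (Nat.succ_ne_zero _)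
  have hwkey : ∀ m : ℕ, ((m : ℝ) + 1) ^ 3 ≤ 27 * w m := by
    intro m
    simp only [hw]
    exact_mod_cast key_cube m
  set f : ℕ → ℝ := fun m => w m * ‖a m‖ ^ 2 with hf
  have hfnn : ∀ m, 0 ≤ f m := fun m => mul_nonneg (by linarith [hw0 m]) (sq_nonneg _)
  have hfzero : ∀ m, N + 1 ≤ m → f m = 0 := by
    intro m hm; simp [hf, hN m hm]
  -- summability facts
  have hsf : Summable f :=
    summable_of_ne_finset_zero (s := Finset.range (N + 1))
      (fun m hm => hfzero m (by simp [Finset.mem_range] at hm; omega))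
  set F : ℝ := ∑' n, f n with hF
  have hF0 : 0 ≤ F := tsum_nonneg hfnn
  -- the norm of gHat entries
  have hGa : ∀ n, ‖gHat a n‖ = w n * ‖a n‖ := by
    intro n
    rw [gHat, norm_mul, Complex.norm_natCast]
  set Y : ℝ := l2norm a with hY
  set X : ℝ := l2norm (gHat a) with hX
  have hY0 : 0 ≤ Y := Real.sqrt_nonneg _
  have hX0 : 0 ≤ X := Real.sqrt_nonneg _
  have hsa : Summable (fun n => ‖a n‖ ^ 2) :=
    summable_of_ne_finset_zero (s := Finset.range (N + 1))
      (fun n hn => by rw [hN n (by simp [Finset.mem_range] at hn; omega)]; simp)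
  have hsG : Summable (fun n => ‖gHat a n‖ ^ 2) :=
    summable_of_ne_finset_zero (s := Finset.range (N + 1))
      (fun n hn => by
        rw [hGa, hN n (by simp [Finset.mem_range] at hn; omega)]; simp)
  -- Y ≤ X
  have hYX : Y ≤ X := by
    rw [hY, hX, l2norm, l2norm]
    apply Real.sqrt_le_sqrt
    refine Summable.tsum_le_tsum (fun n => ?_) hsa hsG
    rw [hGa]
    have h1 : ‖a n‖ ≤ w n * ‖a n‖ := le_mul_of_one_le_left (norm_nonneg _) (hw0 n)
    exact pow_le_pow_left₀ (norm_nonneg _) h1 2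
  -- Cauchy-Schwarz : F ≤ X * Y
  have hCS : F ≤ X * Y := by
    have e1 : F = ∑ n ∈ Finset.range (N + 1), (w n * ‖a n‖) * ‖a n‖ := by
      rw [hF, tsum_eq_sum (s := Finset.range (N + 1))
        (fun m hm => hfzero m (by simp [Finset.mem_range] at hm; omega))]
      exact Finset.sum_congr rfl fun n _ => by rw [hf]; ring
    have e2 : X ^ 2 = ∑ n ∈ Finset.range (N + 1), (w n * ‖a n‖) ^ 2 := by
      rw [hX, l2norm, Real.sq_sqrt (tsum_nonneg fun n => sq_nonneg _),
        tsum_eq_sum (s := Finset.range (N + 1))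
          (fun n hn => by rw [hGa, hN n (by simp [Finset.mem_range] at hn; omega)]; simp)]
      exact Finset.sum_congr rfl fun n _ => by rw [hGa]
    have e3 : Y ^ 2 = ∑ n ∈ Finset.range (N + 1), ‖a n‖ ^ 2 := by
      rw [hY, l2norm, Real.sq_sqrt (tsum_nonneg fun n => sq_nonneg _),
        tsum_eq_sum (s := Finset.range (N + 1))
          (fun n hn => by rw [hN n (by simp [Finset.mem_range] at hn; omega)]; simp)]
    have hcs := Finset.sum_mul_sq_le_sq_mul_sq (Finset.range (N + 1))
      (fun n => w n * ‖a n‖) (fun n => ‖a n‖)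
    have hF2 : F ^ 2 ≤ (X * Y) ^ 2 := by
      rw [e1, mul_pow, e2, e3]; exact hcs
    calc F = Real.sqrt (F ^ 2) := (Real.sqrt_sq hF0).symm
      _ ≤ Real.sqrt ((X * Y) ^ 2) := Real.sqrt_le_sqrt hF2
      _ = X * Y := Real.sqrt_sq (mul_nonneg hX0 hY0)
  -- pointwise bound for H
  have hpt : ∀ n, ‖gribovH μ lam a n‖ ^ 2 ≤
      81 * c ^ 2 * (f (n - 1) + f n + f (n + 1)) := by
    intro n
    match n with
    | 0 =>
      have h0 : gribovH μ lam a 0 = 0 := by rw [gribovH]; simp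
      rw [h0, norm_zero]
      have hs : (0 : ℝ) ≤ f (0 - 1) + f 0 + f (0 + 1) := by
        have := hfnn (0 - 1); have := hfnn 0; have := hfnn (0 + 1); linarith
      calc (0 : ℝ) ^ 2 = 0 := by norm_num
        _ ≤ 81 * c ^ 2 * (f (0 - 1) + f 0 + f (0 + 1)) := mul_nonneg (by positivity) hs
    | (m + 1) =>
      set A := ‖a m‖ with hA
      set B := ‖a (m + 1)‖ with hB
      set D := ‖a (m + 2)‖ with hD
      have hA0 : 0 ≤ A := norm_nonneg _
      have hB0 : 0 ≤ B := norm_nonneg _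
      have hD0 : 0 ≤ D := norm_nonneg _
      set P : ℝ := |lam| * m * Real.sqrt ((m : ℝ) + 1) * A with hP
      set Q : ℝ := |μ| * ((m : ℝ) + 1) * B with hQ
      set R : ℝ := |lam| * ((m : ℝ) + 1) * Real.sqrt ((m : ℝ) + 2) * D with hR
      have hP0 : 0 ≤ P := by positivity
      have hQ0 : 0 ≤ Q := by positivity
      have hR0 : 0 ≤ R := by positivity
      have hnorm : ‖gribovH μ lam a (m + 1)‖ ≤ P + Q + R := by
        rw [gribovH]
        simp only [Nat.succ_ne_zero, if_false, Nat.add_sub_cancel]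
        refine (norm_add₃_le).trans ?_
        have n1 : ‖Complex.I * (lam : ℂ) * ((m : ℕ) : ℂ) *
            ((Real.sqrt ((m + 1 : ℕ) : ℝ) : ℝ) : ℂ) * a m‖ = |lam| * m * Real.sqrt ((m : ℝ) + 1) * A := by
          simp only [norm_mul, Complex.norm_I, Complex.norm_real, Complex.norm_natCast,
            Real.norm_eq_abs, abs_of_nonneg (Real.sqrt_nonneg _), one_mul]
          push_cast
          rw [hA]
        have n2 : ‖(μ : ℂ) * (((m + 1 : ℕ)) : ℂ) * a (m + 1)‖ = |μ| * ((m : ℝ) + 1) * B := by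
          simp only [norm_mul, Complex.norm_real, Complex.norm_natCast, Real.norm_eq_abs]
          push_cast
          rw [hB]
        have n3 : ‖Complex.I * (lam : ℂ) * (((m + 1 : ℕ)) : ℂ) *
            ((Real.sqrt (((m + 1 : ℕ) : ℝ) + 1) : ℝ) : ℂ) * a (m + 2)‖ =
            |lam| * ((m : ℝ) + 1) * Real.sqrt ((m : ℝ) + 2) * D := by
          simp only [norm_mul, Complex.norm_I, Complex.norm_real, Complex.norm_natCast,
            Real.norm_eq_abs, abs_of_nonneg (Real.sqrt_nonneg _), one_mul]
          push_cast
          rw [hD]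
          ring_nf
        rw [n1, n2, n3]
      have hlam : lam ^ 2 ≤ c ^ 2 := by
        rw [hc]
        nlinarith only [sq_abs lam, abs_nonneg lam, abs_nonneg μ,
          mul_nonneg (abs_nonneg lam) (abs_nonneg μ)]
      have hmu : μ ^ 2 ≤ c ^ 2 := by
        rw [hc]
        nlinarith only [sq_abs μ, abs_nonneg lam, abs_nonneg μ,
          mul_nonneg (abs_nonneg lam) (abs_nonneg μ)]
      have hm0 : (0 : ℝ) ≤ (m : ℝ) := Nat.cast_nonneg m
      -- squared coefficient bounds
      have hPsq : P ^ 2 ≤ 27 * c ^ 2 * (w m * A ^ 2) := by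
        have hs : Real.sqrt ((m : ℝ) + 1) ^ 2 = (m : ℝ) + 1 := Real.sq_sqrt (by positivity)
        have hcube : (m : ℝ) ^ 2 * ((m : ℝ) + 1) ≤ 27 * w m := by
          have hstep : (m : ℝ) ^ 2 * ((m : ℝ) + 1) ≤ ((m : ℝ) + 1) ^ 3 := by
            nlinarith only [hm0, sq_nonneg ((m : ℝ))]
          linarith only [hstep, hwkey m]
        have h1 : lam ^ 2 * ((m : ℝ) ^ 2 * ((m : ℝ) + 1)) ≤ c ^ 2 * (27 * w m) :=
          mul_le_mul hlam hcube (by positivity) (sq_nonneg c)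
        calc P ^ 2 = lam ^ 2 * ((m : ℝ) ^ 2 * ((m : ℝ) + 1)) * A ^ 2 := by
              rw [hP]; rw [show (|lam| * ↑m * Real.sqrt ((m : ℝ) + 1) * A) ^ 2 =
                |lam| ^ 2 * (m : ℝ) ^ 2 * Real.sqrt ((m : ℝ) + 1) ^ 2 * A ^ 2 by ring,
                hs, sq_abs]
              ring
          _ ≤ c ^ 2 * (27 * w m) * A ^ 2 := mul_le_mul_of_nonneg_right h1 (sq_nonneg A)
          _ = 27 * c ^ 2 * (w m * A ^ 2) := by ring
      have hQsq : Q ^ 2 ≤ 27 * c ^ 2 * (w (m + 1) * B ^ 2) := by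
        have hcube : ((m : ℝ) + 1) ^ 2 ≤ 27 * w (m + 1) := by
          have h := hwkey (m + 1)
          push_cast at h
          have hstep : ((m : ℝ) + 1) ^ 2 ≤ ((m : ℝ) + 1 + 1) ^ 3 := by
            nlinarith only [hm0, sq_nonneg ((m : ℝ))]
          linarith only [hstep, h]
        have h1 : μ ^ 2 * ((m : ℝ) + 1) ^ 2 ≤ c ^ 2 * (27 * w (m + 1)) :=
          mul_le_mul hmu hcube (by positivity) (sq_nonneg c)
        calc Q ^ 2 = μ ^ 2 * ((m : ℝ) + 1) ^ 2 * B ^ 2 := by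
              rw [hQ]; rw [show (|μ| * ((m : ℝ) + 1) * B) ^ 2 =
                |μ| ^ 2 * ((m : ℝ) + 1) ^ 2 * B ^ 2 by ring, sq_abs]
          _ ≤ c ^ 2 * (27 * w (m + 1)) * B ^ 2 := mul_le_mul_of_nonneg_right h1 (sq_nonneg B)
          _ = 27 * c ^ 2 * (w (m + 1) * B ^ 2) := by ring
      have hRsq : R ^ 2 ≤ 27 * c ^ 2 * (w (m + 2) * D ^ 2) := by
        have hs : Real.sqrt ((m : ℝ) + 2) ^ 2 = (m : ℝ) + 2 := Real.sq_sqrt (by positivity)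
        have hcube : ((m : ℝ) + 1) ^ 2 * ((m : ℝ) + 2) ≤ 27 * w (m + 2) := by
          have h := hwkey (m + 2)
          push_cast at h
          have hstep : ((m : ℝ) + 1) ^ 2 * ((m : ℝ) + 2) ≤ ((m : ℝ) + 2 + 1) ^ 3 := by
            nlinarith only [hm0, sq_nonneg ((m : ℝ))]
          linarith only [hstep, h]
        have h1 : lam ^ 2 * (((m : ℝ) + 1) ^ 2 * ((m : ℝ) + 2)) ≤ c ^ 2 * (27 * w (m + 2)) :=
          mul_le_mul hlam hcube (by positivity) (sq_nonneg c)
        calc R ^ 2 = lam ^ 2 * (((m : ℝ) + 1) ^ 2 * ((m : ℝ) + 2)) * D ^ 2 := by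
              rw [hR]; rw [show (|lam| * ((m : ℝ) + 1) * Real.sqrt ((m : ℝ) + 2) * D) ^ 2 =
                |lam| ^ 2 * ((m : ℝ) + 1) ^ 2 * Real.sqrt ((m : ℝ) + 2) ^ 2 * D ^ 2 by ring,
                hs, sq_abs]
              ring
          _ ≤ c ^ 2 * (27 * w (m + 2)) * D ^ 2 := mul_le_mul_of_nonneg_right h1 (sq_nonneg D)
          _ = 27 * c ^ 2 * (w (m + 2) * D ^ 2) := by ring
      have hfm : f (m + 1 - 1) = w m * A ^ 2 := by simp [hf, hA]
      have hfm1 : f (m + 1) = w (m + 1) * B ^ 2 := by simp [hf, hB]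
      have hfm2 : f (m + 1 + 1) = w (m + 2) * D ^ 2 := by simp [hf, hD]
      rw [hfm, hfm1, hfm2]
      have hHnn : (0 : ℝ) ≤ ‖gribovH μ lam a (m + 1)‖ := norm_nonneg _
      have hsq : ‖gribovH μ lam a (m + 1)‖ ^ 2 ≤ (P + Q + R) ^ 2 :=
        pow_le_pow_left₀ hHnn hnorm 2
      have h3 : (P + Q + R) ^ 2 ≤ 3 * (P ^ 2 + Q ^ 2 + R ^ 2) := by
        nlinarith only [sq_nonneg (P - Q), sq_nonneg (Q - R), sq_nonneg (P - R)]
      linarith only [hsq, h3, hPsq, hQsq, hRsq]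
  -- summing
  have hsH : Summable (fun n => ‖gribovH μ lam a n‖ ^ 2) := by
    refine summable_of_ne_finset_zero (s := Finset.range (N + 2)) (fun n hn => ?_)
    simp [Finset.mem_range] at hn
    have h1 : a (n - 1) = 0 := hN _ (by omega)
    have h2 : a n = 0 := hN _ (by omega)
    have h3 : a (n + 1) = 0 := hN _ (by omega)
    rw [gribovH]
    simp [h1, h2, h3]
  have hg1 : Summable (fun n => f (n - 1)) :=
    summable_of_ne_finset_zero (s := Finset.range (N + 2))
      (fun n hn => hfzero _ (by simp [Finset.mem_range] at hn; omega))
  have hg3 : Summable (fun n => f (n + 1)) :=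
    summable_of_ne_finset_zero (s := Finset.range (N + 1))
      (fun n hn => hfzero _ (by simp [Finset.mem_range] at hn; omega))
  have hsum1 : ∑' n, f (n - 1) ≤ 2 * F := by
    have h := Summable.tsum_eq_zero_add hg1
    simp only [Nat.add_sub_cancel, Nat.zero_sub] at h
    have h0 : f 0 ≤ F := Summable.le_tsum hsf 0 (fun j _ => hfnn j)
    rw [h]; rw [hF]; linarith
  have hsum3 : ∑' n, f (n + 1) ≤ F := by
    have h := Summable.tsum_eq_zero_add hsf
    have := hfnn 0
    rw [hF, h]; linarith
  have hSH : ∑' n, ‖gribovH μ lam a n‖ ^ 2 ≤ 324 * c ^ 2 * F := by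
    have hsum_rhs : Summable (fun n => 81 * c ^ 2 * (f (n - 1) + f n + f (n + 1))) :=
      ((hg1.add hsf).add hg3).mul_left _
    have hle := Summable.tsum_le_tsum hpt hsH hsum_rhs
    have heq : ∑' n, 81 * c ^ 2 * (f (n - 1) + f n + f (n + 1)) =
        81 * c ^ 2 * ((∑' n, f (n - 1)) + F + ∑' n, f (n + 1)) := by
      rw [tsum_mul_left, Summable.tsum_add (hg1.add hsf) hg3, Summable.tsum_add hg1 hsf, hF]
    rw [heq] at hle
    have h4 : (∑' n, f (n - 1)) + F + (∑' n, f (n + 1)) ≤ 4 * F := by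
      linarith only [hsum1, hsum3]
    have h5 := mul_le_mul_of_nonneg_left h4 (by positivity : (0 : ℝ) ≤ 81 * c ^ 2)
    linarith only [hle, h5]
  -- main estimate
  have hmain : l2norm (gribovH μ lam a) ≤ K * Real.sqrt X * Real.sqrt Y := by
    have h1 : l2norm (gribovH μ lam a) ≤ Real.sqrt (324 * c ^ 2 * F) := by
      rw [l2norm]; exact Real.sqrt_le_sqrt hSH
    have h2 : Real.sqrt (324 * c ^ 2 * F) = K * Real.sqrt F := by
      rw [show 324 * c ^ 2 * F = (18 * c) ^ 2 * F by ring, Real.sqrt_mul (sq_nonneg _),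
        Real.sqrt_sq (by positivity), hK]
    have h3 : Real.sqrt F ≤ Real.sqrt X * Real.sqrt Y := by
      rw [← Real.sqrt_mul hX0]
      exact Real.sqrt_le_sqrt hCS
    calc l2norm (gribovH μ lam a) ≤ K * Real.sqrt F := by rw [← h2]; exact h1
      _ ≤ K * (Real.sqrt X * Real.sqrt Y) := by
          exact mul_le_mul_of_nonneg_left h3 hKpos.le
      _ = K * Real.sqrt X * Real.sqrt Y := by ring
  -- final scalar inequality
  rcases eq_or_lt_of_le hY0 with hYz | hYpos
  · have hlhs : l2norm (gribovH μ lam a) ≤ 0 := by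
      have := hmain
      rw [← hYz, Real.sqrt_zero, mul_zero] at this
      exact this
    have hrhs : ε * X ^ p * Y ^ (1 - p) + (K * Real.sqrt T + 1) * Y = 0 := by
      rw [← hYz, Real.zero_rpow (by linarith : (1 : ℝ) - p ≠ 0)]
      ring
    linarith
  · have hXpos : 0 < X := lt_of_lt_of_le hYpos hYX
    rcases le_total X (T * Y) with hcase | hcase
    · -- small case
      have hsmall : K * Real.sqrt X * Real.sqrt Y ≤ K * Real.sqrt T * Y := by
        have h1 : Real.sqrt X ≤ Real.sqrt T * Real.sqrt Y := by
          rw [← Real.sqrt_mul hT0]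
          exact Real.sqrt_le_sqrt hcase
        calc K * Real.sqrt X * Real.sqrt Y ≤ K * (Real.sqrt T * Real.sqrt Y) * Real.sqrt Y := by
              apply mul_le_mul_of_nonneg_right _ (Real.sqrt_nonneg Y)
              exact mul_le_mul_of_nonneg_left h1 hKpos.le
          _ = K * Real.sqrt T * (Real.sqrt Y * Real.sqrt Y) := by ring
          _ = K * Real.sqrt T * Y := by rw [Real.mul_self_sqrt hY0]
      have hεterm : 0 ≤ ε * X ^ p * Y ^ (1 - p) := by positivity
      have : K * Real.sqrt T * Y ≤ (K * Real.sqrt T + 1) * Y := by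
        have := hYpos.le; nlinarith only [hYpos.le]
      linarith [hmain]
    · -- big case
      have hsufficient : K * Real.sqrt X * Real.sqrt Y ≤ ε * X ^ p * Y ^ (1 - p) := by
        have hXθ : (K / ε) * Y ^ θ ≤ X ^ θ := by
          calc (K / ε) * Y ^ θ = (T * Y) ^ θ := by
                rw [Real.mul_rpow hT0 hY0, hTθ]
            _ ≤ X ^ θ := Real.rpow_le_rpow (by positivity) hcase hθpos.le
        have hKY : K * Y ^ θ ≤ ε * X ^ θ := by
          have h := mul_le_mul_of_nonneg_left hXθ hε.le
          calc K * Y ^ θ = ε * ((K / ε) * Y ^ θ) := by field_simp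
            _ ≤ ε * X ^ θ := h
        have hXsplit : X ^ p = X ^ ((1 : ℝ) / 2) * X ^ θ := by
          rw [← Real.rpow_add hXpos]
          congr 1
          rw [hθ]; ring
        have hYsplit : Y ^ ((1 : ℝ) / 2) = Y ^ (1 - p) * Y ^ θ := by
          rw [← Real.rpow_add hYpos]
          congr 1
          rw [hθ]; ring
        rw [Real.sqrt_eq_rpow, Real.sqrt_eq_rpow, hXsplit, hYsplit]
        have h2 := mul_le_mul_of_nonneg_right hKY
          (mul_nonneg (Real.rpow_nonneg hX0 ((1 : ℝ) / 2)) (Real.rpow_nonneg hY0 (1 - p)))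
        linarith only [h2]
      have hCY : 0 ≤ (K * Real.sqrt T + 1) * Y := by positivity
      linarith [hmain]
end
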